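/- arXiv:1606.05061 — 6 statements merged into one kernel-verified Lean document; each statement's English description precedes it below -/
import Mathlib

section
/- Perfect embezzlement is impossible in the tensor product framework, even with ancillas: for all types G_A, R_A, R_B, G_B, writing X := G_A × Fin 2 × R_A, Y := G_B × Fin 2 × R_B and K := ℓ²(X × Y), there do NOT exist unit vectors γ_A ∈ ℓ²(G_A), γ_B ∈ ℓ²(G_B), ψ ∈ ℓ²(R_A × R_B), a vector γ_AB ∈ ℓ²(G_A × G_B), unitary operators U_A on ℓ²(X) and U_B on ℓ²(Y), unitary operators W_A, W_B on K such that W_A is the amplification of U_A to the first factor and W_B is the amplification of U_B to the second factor, and vectors z, w ∈ K with coordinates z((g_A,i,r_A),(g_B,j,r_B)) = γ_A g_A * γ_B g_B * (if i = 0 ∧ j = 0 then ψ (r_A, r_B) else 0) and w((g_A,i,r_A),(g_B,j,r_B)) = γ_AB (g_A, g_B) * (if i = j then (1/√2) * ψ (r_A, r_B) else 0), satisfying W_A (W_B z) = w. -/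
/-- `ℓ²(X)`: the Hilbert space of square-summable families of complex numbers indexed by `X`. -/
noncomputable abbrev l2 (X : Type*) := lp (fun _ : X => ℂ) 2

/-- `W` is the amplification of `T` to the first factor of `ℓ²(X × Y)`. -/
def IsAmplificationFst {X Y : Type*} (T : l2 X ≃ₗᵢ[ℂ] l2 X)
    (W : l2 (X × Y) ≃ₗᵢ[ℂ] l2 (X × Y)) : Prop :=
  ∀ (f : l2 (X × Y)) (g : l2 X) (y : Y),
    (∀ x, g x = f (x, y)) → ∀ x, (W f) (x, y) = (T g) x

/-- `W` is the amplification of `T` to the second factor of `ℓ²(X × Y)`. -/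
def IsAmplificationSnd {X Y : Type*} (T : l2 Y ≃ₗᵢ[ℂ] l2 Y)
    (W : l2 (X × Y) ≃ₗᵢ[ℂ] l2 (X × Y)) : Prop :=
  ∀ (f : l2 (X × Y)) (g : l2 Y) (x : X),
    (∀ y, g y = f (x, y)) → ∀ y, (W f) (x, y) = (T g) y


open scoped InnerProductSpace ENNReal NNReal

section Tens
variable {𝕜 : Type*} [RCLike 𝕜] {A B C D : Type*}

lemma two_toReal : ((2 : ℝ≥0∞).toReal) = (2:ℝ) := by norm_num

lemma memℓp_two_iff (f : ∀ _ : A, 𝕜) :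
    Memℓp f 2 ↔ Summable (fun a => ‖f a‖ ^ (2:ℝ)) := by
  rw [memℓp_gen_iff (by norm_num), two_toReal]

/-- elementary tensor in the concrete `ℓ²` model. -/
noncomputable def tens (f : lp (fun _ : A => 𝕜) 2) (g : lp (fun _ : B => 𝕜) 2) :
    lp (fun _ : A × B => 𝕜) 2 :=
  ⟨fun p => f p.1 * g p.2, by
    apply (memℓp_two_iff _).2
    have hf : Summable fun a => ‖(f : ∀ _ : A, 𝕜) a‖ ^ (2:ℝ) := (memℓp_two_iff _).1 (lp.memℓp f)
    have hg : Summable fun b => ‖(g : ∀ _ : B, 𝕜) b‖ ^ (2:ℝ) := (memℓp_two_iff _).1 (lp.memℓp g)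
    have := hf.mul_of_nonneg hg (fun a => by positivity) (fun b => by positivity)
    refine this.congr fun p => ?_
    rw [norm_mul, Real.mul_rpow (norm_nonneg _) (norm_nonneg _)]⟩

@[simp] lemma tens_apply (f : lp (fun _ : A => 𝕜) 2) (g : lp (fun _ : B => 𝕜) 2) (p : A × B) :
    tens f g p = f p.1 * g p.2 := rfl

end Tens

section More
variable {𝕜 : Type*} [RCLike 𝕜] {A B C D : Type*}

lemma eq_of_rpow_two {a b : ℝ} (ha : 0 ≤ a) (hb : 0 ≤ b)
    (h : a ^ (2:ℝ) = b ^ (2:ℝ)) : a = b := by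
  rw [show ((2:ℝ)) = ((2:ℕ):ℝ) by norm_num, Real.rpow_natCast, Real.rpow_natCast] at h
  have h2 := congrArg Real.sqrt h
  rwa [Real.sqrt_sq ha, Real.sqrt_sq hb] at h2

lemma norm_sq_eq_tsum' (f : lp (fun _ : A => 𝕜) 2) :
    ‖f‖ ^ (2:ℝ) = ∑' a, ‖f a‖ ^ (2:ℝ) := by
  have := lp.norm_rpow_eq_tsum (p := 2) (by norm_num) f
  rwa [two_toReal] at this

/-- reindex an `ℓ²` element along an equiv (by precomposition). -/
noncomputable def reindex (e : A ≃ B) (f : lp (fun _ : B => 𝕜) 2) :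
    lp (fun _ : A => 𝕜) 2 :=
  ⟨fun a => f (e a), by
    apply (memℓp_two_iff _).2
    exact (e.summable_iff (f := fun b => ‖(f : ∀ _ : B, 𝕜) b‖ ^ (2:ℝ))).2
      ((memℓp_two_iff _).1 (lp.memℓp f))⟩

@[simp] lemma reindex_apply (e : A ≃ B) (f : lp (fun _ : B => 𝕜) 2) (a : A) :
    reindex e f a = f (e a) := rfl

lemma inner_reindex (e : A ≃ B) (f g : lp (fun _ : B => 𝕜) 2) :
    ⟪reindex e f, reindex e g⟫_𝕜 = ⟪f, g⟫_𝕜 := by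
  rw [lp.inner_eq_tsum, lp.inner_eq_tsum]
  exact e.tsum_eq (f := fun b => ⟪f b, g b⟫_𝕜)

lemma norm_reindex (e : A ≃ B) (f : lp (fun _ : B => 𝕜) 2) :
    ‖reindex e f‖ = ‖f‖ := by
  have h1 : ‖reindex e f‖ ^ (2:ℝ) = ‖f‖ ^ (2:ℝ) := by
    rw [norm_sq_eq_tsum', norm_sq_eq_tsum']
    exact e.tsum_eq (f := fun b => ‖f b‖ ^ (2:ℝ))
  exact eq_of_rpow_two (norm_nonneg _) (norm_nonneg _) h1

lemma inner_tens (f h : lp (fun _ : A => 𝕜) 2) (g k : lp (fun _ : B => 𝕜) 2) :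
    ⟪tens f g, tens h k⟫_𝕜 = ⟪f, h⟫_𝕜 * ⟪g, k⟫_𝕜 := by
  rw [lp.inner_eq_tsum, lp.inner_eq_tsum, lp.inner_eq_tsum]
  have hsf : Summable fun a => ‖⟪f a, h a⟫_𝕜‖ := by
    refine Summable.of_nonneg_of_le (fun _ => norm_nonneg _)
      (fun a => norm_inner_le_norm (𝕜 := 𝕜) _ _) ?_
    exact lp.summable_mul (by rw [Real.holderConjugate_iff]; norm_num) f h
  have hsg : Summable fun b => ‖⟪g b, k b⟫_𝕜‖ := by
    refine Summable.of_nonneg_of_le (fun _ => norm_nonneg _)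
      (fun b => norm_inner_le_norm (𝕜 := 𝕜) _ _) ?_
    exact lp.summable_mul (by rw [Real.holderConjugate_iff]; norm_num) g k
  refine Eq.trans (tsum_congr fun p => ?_) (tsum_mul_tsum_of_summable_norm hsf hsg).symm
  simp only [tens_apply, RCLike.inner_apply, map_mul]
  ring

end More

section SliceKey
variable {𝕜 : Type*} [RCLike 𝕜] {A B C D : Type*}

lemma norm_tens (f : lp (fun _ : A => 𝕜) 2) (g : lp (fun _ : B => 𝕜) 2) :
    ‖tens f g‖ = ‖f‖ * ‖g‖ := by
  refine eq_of_rpow_two (norm_nonneg _) (by positivity) ?_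
  rw [norm_sq_eq_tsum', Real.mul_rpow (norm_nonneg _) (norm_nonneg _),
    norm_sq_eq_tsum', norm_sq_eq_tsum']
  have hf : Summable fun a => ‖‖f a‖ ^ (2:ℝ)‖ := by
    refine ((memℓp_two_iff _).1 (lp.memℓp f)).congr fun a => ?_
    rw [Real.norm_of_nonneg (by positivity)]
  have hg : Summable fun b => ‖‖g b‖ ^ (2:ℝ)‖ := by
    refine ((memℓp_two_iff _).1 (lp.memℓp g)).congr fun b => ?_
    rw [Real.norm_of_nonneg (by positivity)]
  refine Eq.trans (tsum_congr fun p => ?_) (tsum_mul_tsum_of_summable_norm hf hg).symm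
  rw [tens_apply, norm_mul, Real.mul_rpow (norm_nonneg _) (norm_nonneg _)]

/-- slice of an `ℓ²` element on a product index, along the first coordinate. -/
noncomputable def lpSlice (f : lp (fun _ : A × B => 𝕜) 2) (a : A) :
    lp (fun _ : B => 𝕜) 2 :=
  ⟨fun b => f (a, b), by
    apply (memℓp_two_iff _).2
    exact Summable.prod_factor ((memℓp_two_iff _).1 (lp.memℓp f)) a⟩

@[simp] lemma lpSlice_apply (f : lp (fun _ : A × B => 𝕜) 2) (a : A) (b : B) :
    lpSlice f a b = f (a, b) := rfl

lemma summable_marginal {f : A × B → ℝ} (h : Summable f) :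
    Summable fun a => ∑' b, f (a, b) :=
  (h.hasSum.prod_fiberwise fun a => (h.prod_factor a).hasSum).summable

lemma summable_lpSlice_norm_sq (f : lp (fun _ : A × B => 𝕜) 2) :
    Summable fun a => ‖lpSlice f a‖ ^ (2:ℝ) := by
  have h := (memℓp_two_iff _).1 (lp.memℓp f)
  refine (summable_marginal h).congr fun a => ?_
  rw [norm_sq_eq_tsum']
  rfl

lemma tsum_lpSlice_norm_sq (f : lp (fun _ : A × B => 𝕜) 2) :
    ∑' a, ‖lpSlice f a‖ ^ (2:ℝ) = ‖f‖ ^ (2:ℝ) := by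
  have h := (memℓp_two_iff _).1 (lp.memℓp f)
  rw [norm_sq_eq_tsum', Summable.tsum_prod' h (fun a => h.prod_factor a)]
  exact tsum_congr fun a => by rw [norm_sq_eq_tsum']; rfl

open scoped ComplexConjugate

lemma inner_tens_eq_tsum (x : lp (fun _ : C => 𝕜) 2) (y : lp (fun _ : D => 𝕜) 2)
    (k : lp (fun _ : C × D => 𝕜) 2) :
    ⟪tens x y, k⟫_𝕜 = ∑' cd : C × D, conj (x cd.1) * (conj (y cd.2) * k cd) := by
  rw [lp.inner_eq_tsum]
  exact tsum_congr fun cd => by simp only [tens_apply, RCLike.inner_apply, map_mul]; ring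

lemma key_expansion (u : lp (fun _ : A × C => 𝕜) 2) (v : lp (fun _ : B × D => 𝕜) 2)
    (h : lp (fun _ : A × B => 𝕜) 2) (k : lp (fun _ : C × D => 𝕜) 2) :
    ⟪tens u v, reindex (Equiv.prodProdProdComm A C B D) (tens h k)⟫_𝕜
      = ∑' ab : A × B, h ab * ⟪tens (lpSlice u ab.1) (lpSlice v ab.2), k⟫_𝕜 := by
  set e := Equiv.prodProdProdComm A C B D with he
  set F : (A × C) × (B × D) → 𝕜 :=
    fun m => ⟪(tens u v) m, (reindex e (tens h k)) m⟫_𝕜 with hF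
  have h0 : Summable F := lp.summable_inner _ _
  have hFe : ∀ n : (A × B) × (C × D), F (e.symm n)
      = conj (u (n.1.1, n.2.1)) * (conj (v (n.1.2, n.2.2)) * (h n.1 * k n.2)) := by
    rintro ⟨⟨a, b⟩, ⟨c, d⟩⟩
    simp only [hF, he, tens_apply, reindex_apply, RCLike.inner_apply, map_mul,
      Equiv.prodProdProdComm_symm, Equiv.prodProdProdComm_apply, Equiv.apply_symm_apply]
    ring
  have hsum : Summable fun n : (A × B) × (C × D) =>
      conj (u (n.1.1, n.2.1)) * (conj (v (n.1.2, n.2.2)) * (h n.1 * k n.2)) :=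
    (((Equiv.summable_iff e.symm).2 h0).congr hFe)
  calc ⟪tens u v, reindex e (tens h k)⟫_𝕜 = ∑' m, F m := lp.inner_eq_tsum _ _
    _ = ∑' n : (A × B) × (C × D),
        conj (u (n.1.1, n.2.1)) * (conj (v (n.1.2, n.2.2)) * (h n.1 * k n.2)) := by
        rw [← Equiv.tsum_eq e.symm F]
        exact tsum_congr hFe
    _ = ∑' ab : A × B, ∑' cd : C × D,
        conj (u (ab.1, cd.1)) * (conj (v (ab.2, cd.2)) * (h ab * k cd)) :=
        Summable.tsum_prod' hsum fun ab => hsum.prod_factor ab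
    _ = ∑' ab : A × B, h ab * ⟪tens (lpSlice u ab.1) (lpSlice v ab.2), k⟫_𝕜 := by
        refine tsum_congr fun ab => ?_
        rw [inner_tens_eq_tsum, ← tsum_mul_left]
        exact tsum_congr fun cd => by simp only [lpSlice_apply]; ring

end SliceKey

section Helpers
variable {𝕜 : Type*} [RCLike 𝕜] {A B : Type*}

lemma rpow_two_eq (x : ℝ) : x ^ (2:ℝ) = x ^ 2 := by
  rw [show (2:ℝ) = ((2:ℕ):ℝ) by norm_num, Real.rpow_natCast]

lemma summable_norm_sq (f : lp (fun _ : A => 𝕜) 2) :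
    Summable fun a => ‖f a‖ ^ 2 := by
  refine ((memℓp_two_iff _).1 (lp.memℓp f)).congr fun a => rpow_two_eq _

lemma norm_sq_eq_tsum (f : lp (fun _ : A => 𝕜) 2) :
    ‖f‖ ^ 2 = ∑' a, ‖f a‖ ^ 2 := by
  have := norm_sq_eq_tsum' f
  rw [rpow_two_eq] at this
  rw [this]
  exact tsum_congr fun a => rpow_two_eq _

lemma summable_mul_of_sq_summable {I : Type*} {f g : I → ℝ}
    (hf : Summable fun i => f i ^ 2) (hg : Summable fun i => g i ^ 2) :
    Summable fun i => f i * g i := by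
  apply Summable.of_norm
  refine Summable.of_nonneg_of_le (fun _ => norm_nonneg _) (fun i => ?_)
    ((hf.add hg).mul_left (1/2))
  rw [Real.norm_eq_abs, abs_mul]
  nlinarith [sq_nonneg (|f i| - |g i|), sq_abs (f i), sq_abs (g i), abs_nonneg (f i),
    abs_nonneg (g i)]

lemma cs_two {a0 a1 b0 b1 : ℝ} (ha0 : 0 ≤ a0) (ha1 : 0 ≤ a1) (hb0 : 0 ≤ b0) (hb1 : 0 ≤ b1) :
    a0 * b0 + a1 * b1 ≤ Real.sqrt (a0 ^ 2 + a1 ^ 2) * Real.sqrt (b0 ^ 2 + b1 ^ 2) := by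
  rw [← Real.sqrt_mul (by positivity)]
  rw [show a0 * b0 + a1 * b1 = Real.sqrt ((a0 * b0 + a1 * b1) ^ 2) from
    (Real.sqrt_sq (by positivity)).symm]
  apply Real.sqrt_le_sqrt
  nlinarith [sq_nonneg (a0 * b1 - a1 * b0)]

lemma eq_of_sq_eq {a b : ℝ} (ha : 0 ≤ a) (hb : 0 ≤ b) (h : a ^ 2 = b ^ 2) : a = b := by
  have h2 := congrArg Real.sqrt h
  rwa [Real.sqrt_sq ha, Real.sqrt_sq hb] at h2

end Helpers

section WBound
variable {GA RA GB RB : Type*}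

open scoped ComplexInnerProductSpace

lemma tsum_prod_fin2 {GA : Type*} (f : GA × Fin 2 → ℝ) (hf : Summable f) :
    ∑' α, f α = ∑' gA, (f (gA, 0) + f (gA, 1)) := by
  rw [Summable.tsum_prod' hf fun gA => hf.prod_factor gA]
  exact tsum_congr fun gA => by rw [tsum_fintype, Fin.sum_univ_two]

lemma summable_fst_fin2 {GA : Type*} {f : GA × Fin 2 → ℝ} (hf : Summable f) (i : Fin 2) :
    Summable fun gA => f (gA, i) :=
  hf.comp_injective (fun a b hab => (Prod.ext_iff.1 hab).1)

set_option maxHeartbeats 2000000 in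
lemma w_bound (γAB : lp (fun _ : GA × GB => ℂ) 2) (ψ : lp (fun _ : RA × RB => ℂ) 2) (M : ℝ)
    (hM : ∀ (c : lp (fun _ : RA => ℂ) 2) (d : lp (fun _ : RB => ℂ) 2),
      ‖⟪tens c d, ψ⟫‖ ≤ M * (‖c‖ * ‖d‖))
    (hM0 : 0 ≤ M)
    (u : lp (fun _ : (GA × Fin 2) × RA => ℂ) 2) (v : lp (fun _ : (GB × Fin 2) × RB => ℂ) 2)
    (H : lp (fun _ : (GA × Fin 2) × (GB × Fin 2) => ℂ) 2)
    (hH : ∀ p : (GA × Fin 2) × (GB × Fin 2),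
      H p = γAB (p.1.1, p.2.1) * (if p.1.2 = p.2.2 then (1 / Real.sqrt 2 : ℂ) else 0)) :
    ‖⟪tens u v, reindex (Equiv.prodProdProdComm (GA × Fin 2) RA (GB × Fin 2) RB) (tens H ψ)⟫‖
      ≤ 1 / Real.sqrt 2 * (‖γAB‖ * (M * (‖u‖ * ‖v‖))) := by
  have hs2 : (0:ℝ) < Real.sqrt 2 := Real.sqrt_pos.2 (by norm_num)
  set s : ℝ := 1 / Real.sqrt 2 with hs_def
  have hs : 0 < s := by positivity
  have hsnorm : ‖(1 / Real.sqrt 2 : ℂ)‖ = s := by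
    rw [norm_div, norm_one, Complex.norm_real, Real.norm_of_nonneg hs2.le]
  set Au : GA × Fin 2 → ℝ := fun α => ‖lpSlice u α‖ with hAu_def
  set Bv : GB × Fin 2 → ℝ := fun β => ‖lpSlice v β‖ with hBv_def
  have hAu0 : ∀ α, 0 ≤ Au α := fun α => norm_nonneg _
  have hBv0 : ∀ β, 0 ≤ Bv β := fun β => norm_nonneg _
  have hAu : Summable fun α => Au α ^ 2 :=
    (summable_lpSlice_norm_sq u).congr fun α => rpow_two_eq _
  have hBv : Summable fun β => Bv β ^ 2 :=
    (summable_lpSlice_norm_sq v).congr fun β => rpow_two_eq _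
  set m : (GA × Fin 2) × (GB × Fin 2) → ℝ :=
    fun p => ‖H p‖ * (M * (Au p.1 * Bv p.2)) with hm_def
  have hm0 : ∀ p, 0 ≤ m p := fun p => by
    have := hAu0 p.1; have := hBv0 p.2; positivity
  have hmS : Summable m := by
    have h1 : Summable fun p : (GA × Fin 2) × (GB × Fin 2) => (Au p.1 * Bv p.2) ^ 2 := by
      refine (hAu.mul_of_nonneg hBv (fun α => by positivity) (fun β => by positivity)).congr
        fun p => ?_
      ring
    have h2 := summable_mul_of_sq_summable (summable_norm_sq H) h1
    refine (h2.mul_left M).congr fun p => ?_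
    simp only [hm_def]; ring
  have hterm : ∀ p : (GA × Fin 2) × (GB × Fin 2),
      ‖H p * ⟪tens (lpSlice u p.1) (lpSlice v p.2), ψ⟫‖ ≤ m p := fun p => by
    rw [norm_mul]
    exact mul_le_mul_of_nonneg_left (hM _ _) (norm_nonneg _)
  have hsumm : Summable fun p : (GA × Fin 2) × (GB × Fin 2) =>
      ‖H p * ⟪tens (lpSlice u p.1) (lpSlice v p.2), ψ⟫‖ :=
    Summable.of_nonneg_of_le (fun _ => norm_nonneg _) hterm hmS
  rw [key_expansion]
  have step1 : ‖∑' p : (GA × Fin 2) × (GB × Fin 2),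
      H p * ⟪tens (lpSlice u p.1) (lpSlice v p.2), ψ⟫‖ ≤ ∑' p, m p :=
    (norm_tsum_le_tsum_norm hsumm).trans (Summable.tsum_le_tsum hterm hsumm hmS)
  refine step1.trans ?_
  set σe := Equiv.prodProdProdComm GA (Fin 2) GB (Fin 2) with hσe
  have hm2 : Summable fun q : (GA × GB) × (Fin 2 × Fin 2) => m (σe.symm q) :=
    (Equiv.summable_iff σe.symm).2 hmS
  have hrw : ∑' p, m p = ∑' g : GA × GB, ∑' ij : Fin 2 × Fin 2, m (σe.symm (g, ij)) := by
    rw [← Equiv.tsum_eq σe.symm m]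
    exact Summable.tsum_prod' hm2 fun g => hm2.prod_factor g
  rw [hrw]
  set αu : GA → ℝ := fun gA => Real.sqrt (Au (gA, 0) ^ 2 + Au (gA, 1) ^ 2) with hαu
  set βv : GB → ℝ := fun gB => Real.sqrt (Bv (gB, 0) ^ 2 + Bv (gB, 1) ^ 2) with hβv
  have hαu2 : ∀ gA, αu gA ^ 2 = Au (gA, 0) ^ 2 + Au (gA, 1) ^ 2 := fun gA =>
    Real.sq_sqrt (by positivity)
  have hβv2 : ∀ gB, βv gB ^ 2 = Bv (gB, 0) ^ 2 + Bv (gB, 1) ^ 2 := fun gB =>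
    Real.sq_sqrt (by positivity)
  have hαuS : Summable fun gA => αu gA ^ 2 := by
    refine (((summable_fst_fin2 hAu 0).add (summable_fst_fin2 hAu 1)).congr fun gA => ?_)
    rw [hαu2]
  have hβvS : Summable fun gB => βv gB ^ 2 := by
    refine (((summable_fst_fin2 hBv 0).add (summable_fst_fin2 hBv 1)).congr fun gB => ?_)
    rw [hβv2]
  have hG : Summable fun g : GA × GB => ‖γAB g‖ ^ 2 := summable_norm_sq γAB
  have hinner : ∀ g : GA × GB, ∑' ij : Fin 2 × Fin 2, m (σe.symm (g, ij))
      ≤ s * M * (‖γAB g‖ * (αu g.1 * βv g.2)) := by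
    rintro ⟨g1, g2⟩
    rw [tsum_fintype]
    have hme : ∀ i j : Fin 2, m (σe.symm ((g1, g2), (i, j)))
        = ‖γAB (g1, g2)‖ * (if i = j then s else 0) * (M * (Au (g1, i) * Bv (g2, j))) := by
      intro i j
      rw [show σe.symm ((g1, g2), (i, j)) = ((g1, i), (g2, j)) from rfl]
      simp only [hm_def, hH]
      rw [norm_mul]
      congr 2
      split_ifs
      · exact hsnorm
      · exact norm_zero
    rw [Fintype.sum_prod_type]
    simp only [Fin.sum_univ_two, hme]
    simp only [if_pos rfl, if_neg (show (0:Fin 2) ≠ 1 by decide),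
      if_neg (show (1:Fin 2) ≠ 0 by decide), mul_zero, zero_mul, add_zero, zero_add]
    have hcs := cs_two (hAu0 (g1, 0)) (hAu0 (g1, 1)) (hBv0 (g2, 0)) (hBv0 (g2, 1))
    calc ‖γAB (g1, g2)‖ * s * (M * (Au (g1, 0) * Bv (g2, 0)))
          + ‖γAB (g1, g2)‖ * s * (M * (Au (g1, 1) * Bv (g2, 1)))
        = s * M * ‖γAB (g1, g2)‖ * (Au (g1, 0) * Bv (g2, 0) + Au (g1, 1) * Bv (g2, 1)) := by
          ring
      _ ≤ s * M * ‖γAB (g1, g2)‖ * (αu g1 * βv g2) := by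
          refine mul_le_mul_of_nonneg_left ?_ (by positivity)
          rw [hαu, hβv]
          exact hcs
      _ = s * M * (‖γAB (g1, g2)‖ * (αu g1 * βv g2)) := by ring
  set Γ : lp (fun _ : GA × GB => ℝ) 2 :=
    ⟨fun g => ‖γAB g‖, (memℓp_two_iff _).2 (hG.congr fun g => by
      rw [← rpow_two_eq, Real.norm_of_nonneg (norm_nonneg _)])⟩ with hΓ
  set A2 : lp (fun _ : GA => ℝ) 2 :=
    ⟨αu, (memℓp_two_iff _).2 (hαuS.congr fun gA => by
      rw [← rpow_two_eq, Real.norm_of_nonneg (Real.sqrt_nonneg _)])⟩ with hA2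
  set B2 : lp (fun _ : GB => ℝ) 2 :=
    ⟨βv, (memℓp_two_iff _).2 (hβvS.congr fun gB => by
      rw [← rpow_two_eq, Real.norm_of_nonneg (Real.sqrt_nonneg _)])⟩ with hB2
  have houtS : Summable fun g : GA × GB => ‖γAB g‖ * (αu g.1 * βv g.2) := by
    have h1 : Summable fun g : GA × GB => (αu g.1 * βv g.2) ^ 2 := by
      refine (hαuS.mul_of_nonneg hβvS (fun gA => by positivity) (fun gB => by positivity)).congr
        fun g => ?_
      ring
    exact summable_mul_of_sq_summable hG h1
  have hLHS_S : Summable fun g : GA × GB => ∑' ij : Fin 2 × Fin 2, m (σe.symm (g, ij)) :=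
    summable_marginal hm2
  have step2 : ∑' g : GA × GB, ∑' ij : Fin 2 × Fin 2, m (σe.symm (g, ij))
      ≤ ∑' g : GA × GB, s * M * (‖γAB g‖ * (αu g.1 * βv g.2)) :=
    Summable.tsum_le_tsum hinner hLHS_S (((houtS.mul_left (s * M))).congr fun g => by ring)
  refine step2.trans ?_
  rw [show (∑' g : GA × GB, s * M * (‖γAB g‖ * (αu g.1 * βv g.2)))
      = s * M * ∑' g : GA × GB, ‖γAB g‖ * (αu g.1 * βv g.2) from tsum_mul_left]
  have hip : ∑' g : GA × GB, ‖γAB g‖ * (αu g.1 * βv g.2)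
      = inner (𝕜 := ℝ) Γ (tens A2 B2) := by
    rw [lp.inner_eq_tsum]
    exact tsum_congr fun g => by
      simp only [RCLike.inner_apply, conj_trivial, tens_apply]
      exact mul_comm _ _
  have hnormΓ : ‖Γ‖ = ‖γAB‖ := by
    refine eq_of_sq_eq (norm_nonneg _) (norm_nonneg _) ?_
    rw [norm_sq_eq_tsum, norm_sq_eq_tsum]
    exact tsum_congr fun g => by
      rw [show ‖Γ g‖ = ‖γAB g‖ from by rw [Real.norm_of_nonneg (norm_nonneg _)]]
  have hnormA2 : ‖A2‖ = ‖u‖ := by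
    refine eq_of_sq_eq (norm_nonneg _) (norm_nonneg _) ?_
    rw [norm_sq_eq_tsum]
    have h1 : ∀ gA, ‖A2 gA‖ ^ 2 = αu gA ^ 2 := fun gA => by
      rw [show ‖A2 gA‖ = αu gA from by rw [Real.norm_of_nonneg (Real.sqrt_nonneg _)]]
    calc ∑' gA, ‖A2 gA‖ ^ 2 = ∑' gA, (Au (gA, 0) ^ 2 + Au (gA, 1) ^ 2) :=
          tsum_congr fun gA => by rw [h1, hαu2]
      _ = ∑' α : GA × Fin 2, Au α ^ 2 := (tsum_prod_fin2 _ hAu).symm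
      _ = ‖u‖ ^ 2 := by
          have h2 := tsum_lpSlice_norm_sq u
          rw [rpow_two_eq] at h2
          rw [← h2]
          exact tsum_congr fun α => (rpow_two_eq _).symm
  have hnormB2 : ‖B2‖ = ‖v‖ := by
    refine eq_of_sq_eq (norm_nonneg _) (norm_nonneg _) ?_
    rw [norm_sq_eq_tsum]
    have h1 : ∀ gB, ‖B2 gB‖ ^ 2 = βv gB ^ 2 := fun gB => by
      rw [show ‖B2 gB‖ = βv gB from by rw [Real.norm_of_nonneg (Real.sqrt_nonneg _)]]
    calc ∑' gB, ‖B2 gB‖ ^ 2 = ∑' gB, (Bv (gB, 0) ^ 2 + Bv (gB, 1) ^ 2) :=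
          tsum_congr fun gB => by rw [h1, hβv2]
      _ = ∑' β : GB × Fin 2, Bv β ^ 2 := (tsum_prod_fin2 _ hBv).symm
      _ = ‖v‖ ^ 2 := by
          have h2 := tsum_lpSlice_norm_sq v
          rw [rpow_two_eq] at h2
          rw [← h2]
          exact tsum_congr fun β => (rpow_two_eq _).symm
  have hCS : inner (𝕜 := ℝ) Γ (tens A2 B2) ≤ ‖Γ‖ * ‖tens A2 B2‖ := real_inner_le_norm _ _
  rw [hip]
  calc s * M * inner (𝕜 := ℝ) Γ (tens A2 B2) ≤ s * M * (‖Γ‖ * ‖tens A2 B2‖) :=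
        mul_le_mul_of_nonneg_left hCS (by positivity)
    _ = s * (‖γAB‖ * (M * (‖u‖ * ‖v‖))) := by
        rw [norm_tens, hnormΓ, hnormA2, hnormB2]; ring

end WBound

section Amp
variable {X Y : Type*}

lemma amp_snd_tens (UB : l2 Y ≃ₗᵢ[ℂ] l2 Y) (WB : l2 (X × Y) ≃ₗᵢ[ℂ] l2 (X × Y))
    (h : IsAmplificationSnd UB WB) (a : l2 X) (b : l2 Y) :
    WB (tens a b) = tens a (UB b) := by
  apply lp.ext
  funext p
  obtain ⟨x, y⟩ := p
  have hg : ∀ y', ((a x • b : l2 Y) : ∀ _ : Y, ℂ) y' = (tens a b) (x, y') := fun y' => by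
    simp [lp.coeFn_smul]
  have h2 := h (tens a b) (a x • b) x hg y
  rw [h2, map_smul]
  simp [lp.coeFn_smul]

lemma amp_fst_tens (UA : l2 X ≃ₗᵢ[ℂ] l2 X) (WA : l2 (X × Y) ≃ₗᵢ[ℂ] l2 (X × Y))
    (h : IsAmplificationFst UA WA) (a : l2 X) (b : l2 Y) :
    WA (tens a b) = tens (UA a) b := by
  apply lp.ext
  funext p
  obtain ⟨x, y⟩ := p
  have hg : ∀ x', ((b y • a : l2 X) : ∀ _ : X, ℂ) x' = (tens a b) (x', y) := fun x' => by
    simp [lp.coeFn_smul]; ring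
  have h2 := h (tens a b) (b y • a) y hg x
  rw [h2, map_smul]
  simp [lp.coeFn_smul]
  ring

end Amp

section MainProof
open scoped ComplexInnerProductSpace

set_option maxHeartbeats 3000000 in
/-- Perfect embezzlement is impossible in the tensor product framework,
even with ancillas. -/
theorem no_perfect_embezzlement_tensor (G_A R_A R_B G_B : Type*) :
    ¬ ∃ (γA : l2 G_A) (γB : l2 G_B) (ψ : l2 (R_A × R_B)) (γAB : l2 (G_A × G_B))
        (UA : l2 (G_A × Fin 2 × R_A) ≃ₗᵢ[ℂ] l2 (G_A × Fin 2 × R_A))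
        (UB : l2 (G_B × Fin 2 × R_B) ≃ₗᵢ[ℂ] l2 (G_B × Fin 2 × R_B))
        (WA WB : l2 ((G_A × Fin 2 × R_A) × (G_B × Fin 2 × R_B))
          ≃ₗᵢ[ℂ] l2 ((G_A × Fin 2 × R_A) × (G_B × Fin 2 × R_B)))
        (z w : l2 ((G_A × Fin 2 × R_A) × (G_B × Fin 2 × R_B))),
      ‖γA‖ = 1 ∧ ‖γB‖ = 1 ∧ ‖ψ‖ = 1 ∧
      IsAmplificationFst UA WA ∧
      IsAmplificationSnd UB WB ∧
      (∀ (gA : G_A) (i : Fin 2) (rA : R_A) (gB : G_B) (j : Fin 2) (rB : R_B),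
        z ((gA, i, rA), (gB, j, rB))
          = γA gA * γB gB * (if i = 0 ∧ j = 0 then ψ (rA, rB) else 0)) ∧
      (∀ (gA : G_A) (i : Fin 2) (rA : R_A) (gB : G_B) (j : Fin 2) (rB : R_B),
        w ((gA, i, rA), (gB, j, rB))
          = γAB (gA, gB) * (if i = j then (1 / Real.sqrt 2 : ℂ) * ψ (rA, rB) else 0)) ∧
      WA (WB z) = w := by
  classical
  rintro ⟨γA, γB, ψ, γAB, UA, UB, WA, WB, z, w,
    hγA, hγB, hψ, hampA, hampB, hz, hw, hWAB⟩
  have hs2 : (0:ℝ) < Real.sqrt 2 := Real.sqrt_pos.2 (by norm_num)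
  set s : ℝ := 1 / Real.sqrt 2 with hs_def
  have hs : 0 < s := by positivity
  have hslt : s < 1 := by
    rw [hs_def, div_lt_one hs2]
    nlinarith [Real.sq_sqrt (show (0:ℝ) ≤ 2 by norm_num), Real.sqrt_nonneg 2]
  -- equivalences
  set τA : (G_A × Fin 2 × R_A) ≃ (G_A × Fin 2) × R_A :=
    (Equiv.prodAssoc G_A (Fin 2) R_A).symm with hτA
  set τB : (G_B × Fin 2 × R_B) ≃ (G_B × Fin 2) × R_B :=
    (Equiv.prodAssoc G_B (Fin 2) R_B).symm with hτB
  set τ := Equiv.prodCongr τA τB with hτ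
  set σe := Equiv.prodProdProdComm G_A (Fin 2) G_B (Fin 2) with hσe
  set pp := Equiv.prodProdProdComm (G_A × Fin 2) R_A (G_B × Fin 2) R_B with hpp
  set ζ := pp.trans (Equiv.prodCongr σe (Equiv.refl (R_A × R_B))) with hζ
  set eZ := τ.trans ζ with heZ
  -- Fin 2 vectors
  set e0 : l2 (Fin 2) := lp.single 2 0 1 with he0_def
  set BellC : lp (fun _ : Fin 2 × Fin 2 => ℂ) 2 :=
    ⟨fun q => if q.1 = q.2 then (1 / Real.sqrt 2 : ℂ) else 0,
      (memℓp_two_iff _).2 (.of_finite)⟩ with hBell_def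
  set H := reindex σe (tens γAB BellC) with hH_def
  have hH : ∀ p : (G_A × Fin 2) × (G_B × Fin 2),
      H p = γAB (p.1.1, p.2.1) * (if p.1.2 = p.2.2 then (1 / Real.sqrt 2 : ℂ) else 0) :=
    fun p => rfl
  have he0 : ‖e0‖ = 1 := by
    have := lp.norm_single (p := 2) (E := fun _ : Fin 2 => ℂ) (by norm_num)
      0 (1:ℂ)
    rw [he0_def]
    rw [this, norm_one]
  have hsnormC : ‖(1 / Real.sqrt 2 : ℂ)‖ = s := by
    rw [norm_div, norm_one, Complex.norm_real, Real.norm_of_nonneg hs2.le]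
  have hBell : ‖BellC‖ = 1 := by
    refine eq_of_sq_eq (norm_nonneg _) (by norm_num) ?_
    rw [norm_sq_eq_tsum, tsum_fintype]
    have hc : ∀ q : Fin 2 × Fin 2, ‖BellC q‖ ^ 2 = if q.1 = q.2 then s ^ 2 else 0 := by
      intro q
      rw [show BellC q = if q.1 = q.2 then (1 / Real.sqrt 2 : ℂ) else 0 from rfl]
      split_ifs
      · rw [hsnormC]
      · rw [norm_zero]; ring
    rw [Finset.sum_congr rfl (fun q _ => hc q)]
    rw [Fintype.sum_prod_type, Fin.sum_univ_two, Fin.sum_univ_two, Fin.sum_univ_two,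
      if_pos rfl, if_pos rfl, if_neg (show (0:Fin 2) ≠ 1 by decide),
      if_neg (show (1:Fin 2) ≠ 0 by decide)]
    rw [hs_def, div_pow, one_pow, Real.sq_sqrt (show (0:ℝ) ≤ 2 by norm_num)]
    norm_num
  -- representations
  set GG := tens γA γB with hGG
  set E00 := tens e0 e0 with hE00
  have hGGE : ‖tens GG E00‖ = 1 := by
    rw [norm_tens, hGG, hE00, norm_tens, norm_tens, hγA, hγB, he0]
    norm_num
  have hzrep : z = reindex eZ (tens (tens GG E00) ψ) := by
    apply lp.ext
    funext p
    obtain ⟨⟨gA, i, rA⟩, ⟨gB, j, rB⟩⟩ := p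
    have hcoord : eZ ((gA, i, rA), (gB, j, rB)) = (((gA, gB), (i, j)), (rA, rB)) := rfl
    rw [show z ((gA, i, rA), (gB, j, rB))
        = γA gA * γB gB * (if i = 0 ∧ j = 0 then ψ (rA, rB) else 0) from hz gA i rA gB j rB]
    rw [show (reindex eZ (tens (tens GG E00) ψ) : ∀ _, ℂ) ((gA, i, rA), (gB, j, rB))
        = GG (gA, gB) * E00 (i, j) * ψ (rA, rB) from by
      rw [reindex_apply, hcoord]; rfl]
    rw [show GG (gA, gB) = γA gA * γB gB from rfl]
    rw [show E00 (i, j) = e0 i * e0 j from rfl]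
    rw [he0_def]
    by_cases hi : i = 0 <;> by_cases hj : j = 0 <;>
      simp [lp.single_apply, hi, hj] <;> ring
  have hwrep : w = reindex τ (reindex pp (tens H ψ)) := by
    apply lp.ext
    funext p
    obtain ⟨⟨gA, i, rA⟩, ⟨gB, j, rB⟩⟩ := p
    rw [show w ((gA, i, rA), (gB, j, rB))
        = γAB (gA, gB) * (if i = j then (1 / Real.sqrt 2 : ℂ) * ψ (rA, rB) else 0) from
      hw gA i rA gB j rB]
    rw [show (reindex τ (reindex pp (tens H ψ)) : ∀ _, ℂ) ((gA, i, rA), (gB, j, rB))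
        = H ((gA, i), (gB, j)) * ψ (rA, rB) from rfl]
    rw [hH ((gA, i), (gB, j))]
    by_cases hij : i = j <;> simp [hij] <;> ring
  -- norms
  have hz1 : ‖z‖ = 1 := by
    rw [hzrep, norm_reindex, norm_tens, hGGE, hψ]
    norm_num
  have hw1 : ‖w‖ = 1 := by
    rw [← hWAB, LinearIsometryEquiv.norm_map, LinearIsometryEquiv.norm_map, hz1]
  have hγAB1 : ‖γAB‖ = 1 := by
    have h1 : ‖w‖ = ‖γAB‖ := by
      rw [hwrep, norm_reindex, norm_reindex, norm_tens, hψ, mul_one, hH_def,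
        norm_reindex, norm_tens, hBell, mul_one]
    rw [← h1, hw1]
  -- the supremum
  set S : Set ℝ := {r : ℝ | ∃ (c : l2 R_A) (d : l2 R_B),
    ‖c‖ ≤ 1 ∧ ‖d‖ ≤ 1 ∧ r = ‖⟪tens c d, ψ⟫‖} with hS_def
  have hbdd : BddAbove S := by
    refine ⟨1, ?_⟩
    rintro r ⟨c, d, hc, hd, rfl⟩
    calc ‖⟪tens c d, ψ⟫‖ ≤ ‖tens c d‖ * ‖ψ‖ := norm_inner_le_norm _ _
      _ = ‖c‖ * ‖d‖ := by rw [norm_tens, hψ, mul_one]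
      _ ≤ 1 := by nlinarith [norm_nonneg c, norm_nonneg d]
  have hne : S.Nonempty := ⟨‖⟪tens (0 : l2 R_A) (0 : l2 R_B), ψ⟫‖,
    0, 0, by simp, by simp, rfl⟩
  set M := sSup S with hM_def
  -- positivity
  obtain ⟨pt, hpt⟩ : ∃ pt, ψ pt ≠ 0 := by
    by_contra hcon
    push_neg at hcon
    have : ψ = 0 := lp.ext (funext fun pt => hcon pt)
    rw [this, norm_zero] at hψ
    exact zero_ne_one hψ
  obtain ⟨rA0, rB0⟩ := pt
  set c0 : l2 R_A := lp.single 2 rA0 1 with hc0_def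
  set d0 : l2 R_B := lp.single 2 rB0 1 with hd0_def
  have hc0 : ‖c0‖ = 1 := by
    have := lp.norm_single (p := 2) (E := fun _ : R_A => ℂ) (by norm_num)
      rA0 (1:ℂ)
    rw [hc0_def, this, norm_one]
  have hd0 : ‖d0‖ = 1 := by
    have := lp.norm_single (p := 2) (E := fun _ : R_B => ℂ) (by norm_num)
      rB0 (1:ℂ)
    rw [hd0_def, this, norm_one]
  have htsd : tens c0 d0 = lp.single 2 (rA0, rB0) (1:ℂ) := by
    apply lp.ext
    funext q
    obtain ⟨x, y⟩ := q
    rw [tens_apply, hc0_def, hd0_def]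
    by_cases hx : x = rA0 <;> by_cases hy : y = rB0 <;>
      simp [lp.single_apply, hx, hy, Prod.ext_iff]
  have hinner0 : ⟪tens c0 d0, ψ⟫ = ψ (rA0, rB0) := by
    rw [htsd, lp.inner_single_left]
    simp [RCLike.inner_apply]
  have hmem0 : ‖ψ (rA0, rB0)‖ ∈ S := ⟨c0, d0, le_of_eq hc0, le_of_eq hd0, by rw [hinner0]⟩
  have hMpos : 0 < M := lt_of_lt_of_le (norm_pos_iff.2 hpt) (le_csSup hbdd hmem0)
  have hM0 : 0 ≤ M := hMpos.le
  -- scaling bound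
  have hMscale : ∀ (c : l2 R_A) (d : l2 R_B), ‖⟪tens c d, ψ⟫‖ ≤ M * (‖c‖ * ‖d‖) := by
    intro c d
    by_cases hc : c = 0
    · have : tens c d = 0 := by
        apply lp.ext; funext q; rw [tens_apply, hc]; simp
      rw [this, inner_zero_left, norm_zero, hc, norm_zero]
      simp
    by_cases hd : d = 0
    · have : tens c d = 0 := by
        apply lp.ext; funext q; rw [tens_apply, hd]; simp
      rw [this, inner_zero_left, norm_zero, hd, norm_zero]
      simp
    have hcn : (0:ℝ) < ‖c‖ := norm_pos_iff.2 hc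
    have hdn : (0:ℝ) < ‖d‖ := norm_pos_iff.2 hd
    set c' : l2 R_A := ((‖c‖ : ℂ))⁻¹ • c with hc'_def
    set d' : l2 R_B := ((‖d‖ : ℂ))⁻¹ • d with hd'_def
    have hc' : ‖c'‖ = 1 := by
      rw [hc'_def, norm_smul, norm_inv, Complex.norm_real, Real.norm_of_nonneg hcn.le]
      field_simp
    have hd' : ‖d'‖ = 1 := by
      rw [hd'_def, norm_smul, norm_inv, Complex.norm_real, Real.norm_of_nonneg hdn.le]
      field_simp
    have hfac : tens c d = ((‖c‖ * ‖d‖ : ℝ) : ℂ) • tens c' d' := by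
      apply lp.ext
      funext q
      rw [tens_apply, lp.coeFn_smul, Pi.smul_apply, smul_eq_mul, tens_apply,
        hc'_def, hd'_def, lp.coeFn_smul, lp.coeFn_smul, Pi.smul_apply, Pi.smul_apply,
        smul_eq_mul, smul_eq_mul]
      have h1 : ((‖c‖:ℂ)) ≠ 0 := by
        simp only [ne_eq, Complex.ofReal_eq_zero]
        exact hcn.ne'
      have h2 : ((‖d‖:ℂ)) ≠ 0 := by
        simp only [ne_eq, Complex.ofReal_eq_zero]
        exact hdn.ne'
      push_cast
      field_simp
    rw [hfac, inner_smul_left]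
    rw [norm_mul, RCLike.norm_conj]
    have hmemS : ‖⟪tens c' d', ψ⟫‖ ∈ S := ⟨c', d', le_of_eq hc', le_of_eq hd', rfl⟩
    have hleM : ‖⟪tens c' d', ψ⟫‖ ≤ M := le_csSup hbdd hmemS
    have hnn : ‖(((‖c‖ * ‖d‖ : ℝ)) : ℂ)‖ = ‖c‖ * ‖d‖ := by
      rw [Complex.norm_real, Real.norm_of_nonneg (by positivity)]
    rw [hnn]
    calc ‖c‖ * ‖d‖ * ‖⟪tens c' d', ψ⟫‖ ≤ ‖c‖ * ‖d‖ * M :=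
          mul_le_mul_of_nonneg_left hleM (by positivity)
      _ = M * (‖c‖ * ‖d‖) := by ring
  -- bound for inner products against w
  have hwb : ∀ (a' : l2 (G_A × Fin 2 × R_A)) (b' : l2 (G_B × Fin 2 × R_B)),
      ‖⟪tens a' b', w⟫‖ ≤ s * (M * (‖a'‖ * ‖b'‖)) := by
    intro a' b'
    have hta : tens a' b'
        = reindex τ (tens (reindex τA.symm a') (reindex τB.symm b')) := by
      apply lp.ext
      funext p
      obtain ⟨⟨gA, i, rA⟩, ⟨gB, j, rB⟩⟩ := p
      rfl
    rw [hwrep, hta, inner_reindex]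
    have hb := w_bound γAB ψ M hMscale hM0 (reindex τA.symm a') (reindex τB.symm b') H hH
    rw [norm_reindex, norm_reindex, hγAB1] at hb
    calc ‖⟪tens (reindex τA.symm a') (reindex τB.symm b'), reindex pp (tens H ψ)⟫‖
        ≤ 1 / Real.sqrt 2 * (1 * (M * (‖a'‖ * ‖b'‖))) := hb
      _ = s * (M * (‖a'‖ * ‖b'‖)) := by rw [hs_def]; ring
  -- inner products against z
  have hpz : ∀ (c : l2 R_A) (d : l2 R_B),
      ⟪tens (tens γA (tens e0 c)) (tens γB (tens e0 d)), z⟫ = ⟪tens c d, ψ⟫ := by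
    intro c d
    have hrep : tens (tens γA (tens e0 c)) (tens γB (tens e0 d))
        = reindex eZ (tens (tens GG E00) (tens c d)) := by
      apply lp.ext
      funext p
      obtain ⟨⟨gA, i, rA⟩, ⟨gB, j, rB⟩⟩ := p
      rw [show (reindex eZ (tens (tens GG E00) (tens c d)) : ∀ _, ℂ)
          ((gA, i, rA), (gB, j, rB)) = GG (gA, gB) * E00 (i, j) * (c rA * d rB) from rfl]
      rw [show (tens (tens γA (tens e0 c)) (tens γB (tens e0 d)) : ∀ _, ℂ)
          ((gA, i, rA), (gB, j, rB)) = γA gA * (e0 i * c rA) * (γB gB * (e0 j * d rB)) from rfl]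
      rw [show GG (gA, gB) = γA gA * γB gB from rfl,
        show E00 (i, j) = e0 i * e0 j from rfl]
      ring
    rw [hrep, hzrep, inner_reindex, inner_tens, inner_self_eq_norm_sq_to_K, hGGE]
    norm_num
  -- every element of S is at most s * M
  have hle : ∀ r ∈ S, r ≤ s * M := by
    rintro r ⟨c, d, hc, hd, rfl⟩
    set a := tens γA (tens e0 c) with ha_def
    set b := tens γB (tens e0 d) with hb_def
    have hab : WA (WB (tens a b)) = tens (UA a) (UB b) := by
      rw [amp_snd_tens UB WB hampB, amp_fst_tens UA WA hampA]
    have h1 : ⟪tens (UA a) (UB b), w⟫ = ⟪tens c d, ψ⟫ := by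
      rw [← hab, ← hWAB, LinearIsometryEquiv.inner_map_map, LinearIsometryEquiv.inner_map_map]
      exact hpz c d
    have h2 := hwb (UA a) (UB b)
    rw [h1] at h2
    have hna : ‖UA a‖ ≤ 1 := by
      rw [LinearIsometryEquiv.norm_map, ha_def, norm_tens, norm_tens, hγA, he0]
      simpa using hc
    have hnb : ‖UB b‖ ≤ 1 := by
      rw [LinearIsometryEquiv.norm_map, hb_def, norm_tens, norm_tens, hγB, he0]
      simpa using hd
    calc ‖⟪tens c d, ψ⟫‖ ≤ s * (M * (‖UA a‖ * ‖UB b‖)) := h2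
      _ ≤ s * M := by
          have hxy : ‖UA a‖ * ‖UB b‖ ≤ 1 := mul_le_one₀ hna (norm_nonneg _) hnb
          have h3 : M * (‖UA a‖ * ‖UB b‖) ≤ M * 1 := mul_le_mul_of_nonneg_left hxy hM0
          have h4 := mul_le_mul_of_nonneg_left h3 hs.le
          simpa using h4
  have hfin : M ≤ s * M := csSup_le hne hle
  nlinarith [hMpos, hslt, hfin, hs]

end MainProof
end

section
/- Local unitaries preserve Schmidt decompositions: let X and Y be types, U_A a unitary operator on ℓ²(X), U_B a unitary operator on ℓ²(Y), and W_A, W_B unitary operators on ℓ²(X × Y) such that W_A is the amplification of U_A to the first factor and W_B is the amplification of U_B to the second factor. Suppose z ∈ ℓ²(X × Y), d : ℕ → ℝ is nonnegative with ∑' k, (d k)² < ∞, u : ℕ → ℓ²(X) and v : ℕ → ℓ²(Y) are orthonormal sequences, and for every (x, y), z (x, y) = ∑' k, (d k : ℂ) * (u k) x * (v k) y. Then the sequences k ↦ U_A (u k) and k ↦ U_B (v k) are orthonormal and for every (x, y), (W_A (W_B z)) (x, y) = ∑' k, (d k : ℂ) * (U_A (u k)) x * (U_B (v k)) y; in particular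 z and W_A (W_B z) have the same Schmidt coefficients. -/
/-- Coordinate evaluation as a continuous linear map on `ℓ²`. -/
noncomputable def evalCLM {X : Type*} (x : X) : l2 X →L[ℂ] ℂ :=
  LinearMap.mkContinuous
    { toFun := fun f => f x
      map_add' := fun _ _ => rfl
      map_smul' := fun _ _ => rfl } 1
    (fun f => by rw [one_mul]; exact lp.norm_apply_le_norm (by norm_num) f x)

theorem hasSum_eval {X : Type*} {f : ℕ → l2 X} {S : l2 X} (h : HasSum f S) (x : X) :
    HasSum (fun k => f k x) (S x) := h.mapL (evalCLM x)

/-- Slices of `ℓ²(X × Y)` with first coordinate fixed are in `ℓ²(Y)`. -/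
theorem memℓp_slice_snd {X Y : Type*} (z : l2 (X × Y)) (x : X) :
    Memℓp (fun y => z (x, y)) 2 := by
  apply memℓp_gen
  have hz2 : Summable fun p : X × Y => ‖z p‖ ^ (2 : ENNReal).toReal :=
    (memℓp_gen_iff (by norm_num)).1 (lp.memℓp z)
  exact hz2.comp_injective fun a b hab => congrArg Prod.snd hab

/-- Slices of `ℓ²(X × Y)` with second coordinate fixed are in `ℓ²(X)`. -/
theorem memℓp_slice_fst {X Y : Type*} (z : l2 (X × Y)) (y : Y) :
    Memℓp (fun x => z (x, y)) 2 := by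
  apply memℓp_gen
  have hz2 : Summable fun p : X × Y => ‖z p‖ ^ (2 : ENNReal).toReal :=
    (memℓp_gen_iff (by norm_num)).1 (lp.memℓp z)
  exact hz2.comp_injective fun a b hab => congrArg Prod.fst hab

theorem coeff_summable {d : ℕ → ℝ} (hsum : Summable fun k => (d k) ^ 2)
    (a : ℕ → ℂ) (ha : ∀ k, ‖a k‖ ≤ 1) :
    Summable fun k => ‖(d k : ℂ) * a k‖ ^ 2 := by
  refine Summable.of_nonneg_of_le (fun k => by positivity) (fun k => ?_) hsum
  rw [norm_mul, mul_pow, Complex.norm_real]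
  have h1 : ‖a k‖ ^ 2 ≤ 1 := by
    have := ha k
    have h0 : (0:ℝ) ≤ ‖a k‖ := norm_nonneg _
    nlinarith
  calc |d k| ^ 2 * ‖a k‖ ^ 2 ≤ |d k| ^ 2 * 1 :=
        mul_le_mul_of_nonneg_left h1 (by positivity)
    _ = d k ^ 2 := by rw [mul_one, sq_abs]

theorem key {X : Type*} {w : ℕ → l2 X} (hw : Orthonormal ℂ w) (c : ℕ → ℂ)
    (hc : Summable fun k => ‖c k‖ ^ 2) :
    ∃ S : l2 X, HasSum (fun k => c k • w k) S ∧ ∀ x, S x = ∑' k, c k * (w k) x := by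
  have h1 : Summable fun k => c k • w k := by
    have := (hw.orthogonalFamily.summable_iff_norm_sq_summable c).2 hc
    simpa [LinearIsometry.toSpanSingleton] using this
  refine ⟨∑' k, c k • w k, h1.hasSum, fun x => ?_⟩
  have h2 := hasSum_eval h1.hasSum x
  simp only [lp.coeFn_smul, Pi.smul_apply, smul_eq_mul] at h2
  exact h2.tsum_eq.symm

theorem key' {X : Type*} {w : ℕ → l2 X} (hw : Orthonormal ℂ w) (U : l2 X ≃ₗᵢ[ℂ] l2 X)
    (c : ℕ → ℂ) (hc : Summable fun k => ‖c k‖ ^ 2) :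
    ∃ S : l2 X, (∀ x, S x = ∑' k, c k * (w k) x) ∧
      ∀ x, (U S) x = ∑' k, c k * (U (w k)) x := by
  obtain ⟨S, hS, heval⟩ := key hw c hc
  refine ⟨S, heval, fun x => ?_⟩
  have hUS : HasSum (fun k => c k • U (w k)) (U S) := by
    have := hS.mapL U.toContinuousLinearEquiv.toContinuousLinearMap
    simpa using this
  have h2 := hasSum_eval hUS x
  simp only [lp.coeFn_smul, Pi.smul_apply, smul_eq_mul] at h2
  exact h2.tsum_eq.symm

/-- Local unitaries preserve Schmidt decompositions: if `z` has Schmidt decomposition with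
coefficients `d` and orthonormal sequences `u`, `v`, then `W_A (W_B z)` has Schmidt
decomposition with the same coefficients `d` and orthonormal sequences `U_A ∘ u`, `U_B ∘ v`. -/
theorem local_unitaries_preserve_schmidt {X Y : Type*}
    (UA : l2 X ≃ₗᵢ[ℂ] l2 X) (UB : l2 Y ≃ₗᵢ[ℂ] l2 Y)
    (WA WB : l2 (X × Y) ≃ₗᵢ[ℂ] l2 (X × Y))
    (hWA : IsAmplificationFst UA WA) (hWB : IsAmplificationSnd UB WB)
    (z : l2 (X × Y)) (d : ℕ → ℝ) (hd : ∀ k, 0 ≤ d k)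
    (hsum : Summable fun k => (d k) ^ 2)
    (u : ℕ → l2 X) (v : ℕ → l2 Y)
    (hu : Orthonormal ℂ u) (hv : Orthonormal ℂ v)
    (hz : ∀ (x : X) (y : Y), z (x, y) = ∑' k, (d k : ℂ) * (u k) x * (v k) y) :
    Orthonormal ℂ (fun k => UA (u k)) ∧
    Orthonormal ℂ (fun k => UB (v k)) ∧
    ∀ (x : X) (y : Y),
      (WA (WB z)) (x, y) = ∑' k, (d k : ℂ) * (UA (u k)) x * (UB (v k)) y := by
  refine ⟨hu.comp_linearIsometryEquiv UA, hv.comp_linearIsometryEquiv UB, ?_⟩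
  have hnormu : ∀ k (x : X), ‖(u k) x‖ ≤ 1 := fun k x =>
    (lp.norm_apply_le_norm (by norm_num) (u k) x).trans (le_of_eq (hu.1 k))
  have hnormUBv : ∀ k (y : Y), ‖(UB (v k)) y‖ ≤ 1 := fun k y =>
    (lp.norm_apply_le_norm (by norm_num) (UB (v k)) y).trans
      (le_of_eq (by rw [UB.norm_map]; exact hv.1 k))
  -- Step B: apply WB
  have stepB : ∀ (x : X) (y : Y),
      (WB z) (x, y) = ∑' k, (d k : ℂ) * (u k) x * (UB (v k)) y := by
    intro x
    set c : ℕ → ℂ := fun k => (d k : ℂ) * (u k) x with hcdef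
    have hcs : Summable fun k => ‖c k‖ ^ 2 := coeff_summable hsum _ (fun k => hnormu k x)
    obtain ⟨S, hS, hUS⟩ := key' hv UB c hcs
    set g : l2 Y := ⟨fun y => z (x, y), memℓp_slice_snd z x⟩ with hgdef
    have hg : ∀ y, g y = z (x, y) := fun _ => rfl
    have hgS : g = S := by
      apply lp.ext
      funext y
      show z (x, y) = S y
      rw [hz x y, hS y]
    intro y
    rw [hWB z g x hg y, hgS, hUS y]
  -- Step A: apply WA
  intro x y
  set c : ℕ → ℂ := fun k => (d k : ℂ) * (UB (v k)) y with hcdef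
  have hcs : Summable fun k => ‖c k‖ ^ 2 := coeff_summable hsum _ (fun k => hnormUBv k y)
  obtain ⟨S, hS, hUS⟩ := key' hu UA c hcs
  set g : l2 X := ⟨fun x => (WB z) (x, y), memℓp_slice_fst (WB z) y⟩ with hgdef
  have hg : ∀ x, g x = (WB z) (x, y) := fun _ => rfl
  have hgS : g = S := by
    apply lp.ext
    funext x'
    show (WB z) (x', y) = S x'
    rw [stepB x' y, hS x']
    exact tsum_congr fun k => by ring
  rw [hWA (WB z) g y hg x, hgS, hUS x]
  exact tsum_congr fun k => by ring
end

section
/- Let H be a complex Hilbert space, C : H →L[ℂ] H a contraction (‖C‖ ≤ 1), and M a closed subspace of H that is invariant for C (C x ∈ M for all x ∈ M) and on which C acts as a unitary, i.e., ‖C x‖ = ‖x‖ for all x ∈ M and C maps M onto M. Then M is also invariant for the adjoint C†, and the restriction of C† to M is the inverse of the restriction of C: for all x ∈ M, C† x ∈ M, C (C† x) = x, and C† (C x) = x. -/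
/-- If a contraction `C` leaves a closed subspace `M` invariant and acts unitarily on it,
then `M` is also invariant for the adjoint `C†`, which restricts to the inverse of `C` on
`M`. -/
theorem adjoint_invariant_of_contraction_unitary_on_invariant_subspace
    {H : Type*} [NormedAddCommGroup H] [InnerProductSpace ℂ H] [CompleteSpace H]
    (C : H →L[ℂ] H) (hC : ‖C‖ ≤ 1)
    (M : Submodule ℂ H) (hMclosed : IsClosed (M : Set H))
    (hinv : ∀ x ∈ M, C x ∈ M)
    (hiso : ∀ x ∈ M, ‖C x‖ = ‖x‖)
    (honto : ∀ y ∈ M, ∃ x ∈ M, C x = y) :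
    ∀ x ∈ M, ContinuousLinearMap.adjoint C x ∈ M ∧
      C (ContinuousLinearMap.adjoint C x) = x ∧
      ContinuousLinearMap.adjoint C (C x) = x := by
  have hadj : ‖ContinuousLinearMap.adjoint C‖ ≤ 1 := by
    rw [ContinuousLinearMap.adjoint.norm_map C]; exact hC
  have key : ∀ x ∈ M, ContinuousLinearMap.adjoint C (C x) = x := by
    intro x hx
    set a := ContinuousLinearMap.adjoint C (C x) with ha
    have hnorm : ‖a‖ ≤ ‖x‖ := by
      calc ‖a‖ ≤ ‖ContinuousLinearMap.adjoint C‖ * ‖C x‖ :=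
            (ContinuousLinearMap.adjoint C).le_opNorm _
        _ ≤ 1 * ‖x‖ := by
            rw [hiso x hx]
            exact mul_le_mul_of_nonneg_right hadj (norm_nonneg x)
        _ = ‖x‖ := one_mul _
    have hre : RCLike.re (inner ℂ a x : ℂ) = ‖x‖ ^ 2 := by
      have h : (inner ℂ a x : ℂ) = inner ℂ (C x) (C x) := by
        rw [ha, ContinuousLinearMap.adjoint_inner_left]
      rw [h, inner_self_eq_norm_sq_to_K, hiso x hx]
      simp [Complex.ofReal_pow]
      norm_cast
    have hzero : ‖a - x‖ ^ 2 ≤ 0 := by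
      rw [@norm_sub_sq ℂ, hre]
      nlinarith [norm_nonneg a, norm_nonneg x]
    have h2 : ‖a - x‖ = 0 := le_antisymm (by nlinarith [norm_nonneg (a - x)]) (norm_nonneg _)
    exact sub_eq_zero.mp (norm_eq_zero.mp h2)
  intro x hx
  obtain ⟨y, hy, hCy⟩ := honto x hx
  have h1 : ContinuousLinearMap.adjoint C x = y := by rw [← hCy]; exact key y hy
  refine ⟨h1 ▸ hy, ?_, key x hx⟩
  rw [h1, hCy]
end

section
/- Let H be a complex Hilbert space, C : H →L[ℂ] H a contraction (‖C‖ ≤ 1), and h ∈ H a vector such that ‖C^n h‖ = 1 for all n ∈ ℕ. Let M be the topological closure of the linear span of { C^n h : n ∈ ℕ }. Then M is an invariant subspace for C (C x ∈ M for all x ∈ M), and C acts isometrically on M: for every v ∈ M, ‖C v‖ = ‖v‖. -/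
open ContinuousLinearMap
open scoped ComplexInnerProductSpace

/-- If a contraction preserves the norm of `v`, then `C† (C v) = v`. -/
lemma aux_adjoint_fix {H : Type*} [NormedAddCommGroup H] [InnerProductSpace ℂ H]
    [CompleteSpace H] (C : H →L[ℂ] H) (hC : ‖C‖ ≤ 1) (v : H) (hv : ‖C v‖ = ‖v‖) :
    ContinuousLinearMap.adjoint C (C v) = v := by
  have key : ∀ y : H, (⟪C v, C y⟫ : ℂ) = ⟪v, y⟫ := by
    intro y
    by_contra hne
    set a : ℂ := ⟪C v, C y⟫ - ⟪v, y⟫ with ha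
    have ha0 : a ≠ 0 := sub_ne_zero.mpr hne
    have hbase : ∀ t : ℂ, 2 * Complex.re (t * a) ≤ ‖t‖ ^ 2 * ‖y‖ ^ 2 := by
      intro t
      have hle : ‖C v + t • C y‖ ≤ ‖v + t • y‖ := by
        have h1 : C (v + t • y) = C v + t • C y := by simp
        calc ‖C v + t • C y‖ = ‖C (v + t • y)‖ := by rw [h1]
          _ ≤ ‖C‖ * ‖v + t • y‖ := C.le_opNorm _
          _ ≤ 1 * ‖v + t • y‖ := by
              exact mul_le_mul_of_nonneg_right hC (norm_nonneg _)
          _ = ‖v + t • y‖ := one_mul _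
      have hsq : ‖C v + t • C y‖ ^ 2 ≤ ‖v + t • y‖ ^ 2 :=
        pow_le_pow_left₀ (norm_nonneg _) hle 2
      rw [norm_add_sq (𝕜 := ℂ), norm_add_sq (𝕜 := ℂ)] at hsq
      have e1 : (⟪C v, t • C y⟫ : ℂ) = t * ⟪C v, C y⟫ := inner_smul_right _ _ _
      have e2 : (⟪v, t • y⟫ : ℂ) = t * ⟪v, y⟫ := inner_smul_right _ _ _
      rw [e1, e2, hv, norm_smul, norm_smul] at hsq
      simp only [RCLike.re_to_complex] at hsq
      have hCy : ‖C y‖ ≤ ‖y‖ := by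
        calc ‖C y‖ ≤ ‖C‖ * ‖y‖ := C.le_opNorm _
          _ ≤ 1 * ‖y‖ := mul_le_mul_of_nonneg_right hC (norm_nonneg _)
          _ = ‖y‖ := one_mul _
      have hre : Complex.re (t * a) = Complex.re (t * ⟪C v, C y⟫) -
          Complex.re (t * ⟪v, y⟫) := by
        rw [ha, mul_sub, Complex.sub_re]
      nlinarith [sq_nonneg (‖t‖ * ‖C y‖), sq_nonneg ‖t‖, norm_nonneg (C y),
        norm_nonneg y, norm_nonneg t, mul_pow ‖t‖ ‖C y‖ 2, mul_pow ‖t‖ ‖y‖ 2]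
    -- choose t = ε * conj a
    set ε : ℝ := 1 / (‖y‖ ^ 2 + 1) with hε
    have hεpos : 0 < ε := by positivity
    have := hbase ((ε : ℂ) * (starRingEnd ℂ) a)
    have hta : ((ε : ℂ) * (starRingEnd ℂ) a) * a = (ε : ℂ) * (‖a‖ ^ 2 : ℝ) := by
      rw [mul_assoc, mul_comm ((starRingEnd ℂ) a) a, Complex.mul_conj]
      norm_cast
      simp [Complex.normSq_eq_norm_sq]
    rw [hta] at this
    have hre2 : Complex.re ((ε : ℂ) * ((‖a‖ ^ 2 : ℝ) : ℂ)) = ε * ‖a‖ ^ 2 := by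
      norm_cast
    rw [hre2] at this
    have hnt : ‖(ε : ℂ) * (starRingEnd ℂ) a‖ = ε * ‖a‖ := by
      simp [norm_mul, Complex.norm_real, Real.norm_eq_abs, abs_of_pos hεpos]
    rw [hnt] at this
    have hapos : 0 < ‖a‖ ^ 2 := pow_pos (norm_pos_iff.mpr ha0) 2
    -- 2 * ε * ‖a‖^2 ≤ ε^2 * ‖a‖^2 * ‖y‖^2 ⇒ 2 ≤ ε * ‖y‖^2
    have h2 : 2 ≤ ε * ‖y‖ ^ 2 := by
      nlinarith [mul_pos hεpos hapos, this]
    have : ε * ‖y‖ ^ 2 < 1 := by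
      rw [hε]
      rw [div_mul_eq_mul_div, one_mul, div_lt_one (by positivity)]
      linarith
    linarith
  apply ext_inner_right ℂ
  intro y
  rw [ContinuousLinearMap.adjoint_inner_left]
  exact key y

/-- If `C` is a contraction and `‖C^n h‖ = 1` for all `n`, then the closure `M` of the span
of `{C^n h : n ∈ ℕ}` is invariant for `C` and `C` acts isometrically on `M`. -/
theorem contraction_isometric_on_span_of_unit_orbit
    {H : Type*} [NormedAddCommGroup H] [InnerProductSpace ℂ H] [CompleteSpace H]
    (C : H →L[ℂ] H) (hC : ‖C‖ ≤ 1) (h : H) (hh : ∀ n : ℕ, ‖(C ^ n) h‖ = 1) :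
    (∀ x ∈ (Submodule.span ℂ (Set.range fun n : ℕ => (C ^ n) h)).topologicalClosure,
      C x ∈ (Submodule.span ℂ (Set.range fun n : ℕ => (C ^ n) h)).topologicalClosure) ∧
    (∀ v ∈ (Submodule.span ℂ (Set.range fun n : ℕ => (C ^ n) h)).topologicalClosure,
      ‖C v‖ = ‖v‖) := by
  set S : Submodule ℂ H := Submodule.span ℂ (Set.range fun n : ℕ => (C ^ n) h) with hS
  -- C maps S into S
  have hCS : ∀ x ∈ S, C x ∈ S := by
    intro x hx
    induction hx using Submodule.span_induction with
    | mem x hx =>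
        obtain ⟨n, rfl⟩ := hx
        apply Submodule.subset_span
        refine ⟨n + 1, ?_⟩
        show (C ^ (n + 1)) h = C ((C ^ n) h)
        rw [pow_succ', ContinuousLinearMap.mul_apply]
    | zero => simp
    | add x y _ _ hx hy => rw [map_add]; exact S.add_mem hx hy
    | smul c x _ hx => rw [map_smul]; exact S.smul_mem c hx
  -- invariance of the closure
  have hinv : ∀ x ∈ S.topologicalClosure, C x ∈ S.topologicalClosure := by
    intro x hx
    have hx' : x ∈ closure (S : Set H) := hx
    exact map_mem_closure C.continuous hx' hCS
  refine ⟨hinv, ?_⟩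
  -- the fixed-point submodule of C† ∘ C
  set D : H →L[ℂ] H := (ContinuousLinearMap.adjoint C).comp C - ContinuousLinearMap.id ℂ H
    with hD
  have hKclosed : IsClosed ((LinearMap.ker (D : H →ₗ[ℂ] H) : Submodule ℂ H) : Set H) := by exact ContinuousLinearMap.isClosed_ker D
  have hSK : S ≤ LinearMap.ker (D : H →ₗ[ℂ] H) := by
    rw [hS, Submodule.span_le]
    rintro _ ⟨n, rfl⟩
    simp only [SetLike.mem_coe, LinearMap.mem_ker]
    have hnorm : ‖C ((C ^ n) h)‖ = ‖(C ^ n) h‖ := by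
      have : C ((C ^ n) h) = (C ^ (n + 1)) h := by
        rw [pow_succ', ContinuousLinearMap.mul_apply]
      rw [this, hh, hh]
    have := aux_adjoint_fix C hC ((C ^ n) h) hnorm
    simpa [hD, ContinuousLinearMap.sub_apply, ContinuousLinearMap.comp_apply] using sub_eq_zero.mpr this
  have hMK : S.topologicalClosure ≤ LinearMap.ker (D : H →ₗ[ℂ] H) :=
    S.topologicalClosure_minimal hSK hKclosed
  intro v hv
  have hDv : ContinuousLinearMap.adjoint C (C v) = v := by
    have := hMK hv
    rw [LinearMap.mem_ker] at this
    have h0 : ContinuousLinearMap.adjoint C (C v) - v = 0 := by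
      simpa [hD, ContinuousLinearMap.sub_apply, ContinuousLinearMap.comp_apply] using this
    exact sub_eq_zero.mp h0
  have hsq : ‖C v‖ ^ 2 = ‖v‖ ^ 2 := by
    have h1 : (⟪C v, C v⟫ : ℂ) = ⟪v, v⟫ := by
      rw [← ContinuousLinearMap.adjoint_inner_left, hDv]
    have h2 : RCLike.re (⟪C v, C v⟫ : ℂ) = RCLike.re (⟪v, v⟫ : ℂ) := by rw [h1]
    rwa [inner_self_eq_norm_sq, inner_self_eq_norm_sq] at h2
  calc ‖C v‖ = Real.sqrt (‖C v‖ ^ 2) := (Real.sqrt_sq (norm_nonneg _)).symm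
    _ = Real.sqrt (‖v‖ ^ 2) := by rw [hsq]
    _ = ‖v‖ := Real.sqrt_sq (norm_nonneg _)
end

section
/- Let H be a complex Hilbert space, ψ ∈ H a unit vector, and U₀₀, U₁₀, V₀₀, V₁₀ : H →L[ℂ] H bounded operators satisfying: U₀₀† ∘ U₀₀ + U₁₀† ∘ U₁₀ = 1 and V₀₀† ∘ V₀₀ + V₁₀† ∘ V₁₀ = 1; each of U₀₀, U₁₀ *-commutes with each of V₀₀, V₁₀; and the perfect embezzlement relations hold: U₀₀ (V₀₀ ψ) = (1/√2) • ψ, U₁₀ (V₁₀ ψ) = (1/√2) • ψ, U₀₀ (V₁₀ ψ) = 0, U₁₀ (V₀₀ ψ) = 0. Then: (i) U₀₀ ψ = (1/√2) • (V₀₀† ψ) and V₀₀ ψ = (1/√2) • (U₀₀† ψ); (ii) for every n ∈ ℕ, (V₀₀†)^n ψ = (√2)^n • (U₀₀^n ψ) and V₀₀^n ψ = (1/√2)^n • ((U₀₀†)^n ψ); (iii) for every n ∈ ℕ, U₀₀^n ((U₀₀†)^n ψ) = ψ; and (iv) for every n ∈ ℕ, ‖(U₀₀†)^n ψ‖ =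 1. -/
set_option maxHeartbeats 1000000


open ContinuousLinearMap

/-- Two bounded operators *-commute. -/
def StarCommuteOps {H : Type*} [NormedAddCommGroup H] [InnerProductSpace ℂ H]
    [CompleteSpace H] (A B : H →L[ℂ] H) : Prop :=
  A ∘L B = B ∘L A ∧ (adjoint A) ∘L B = B ∘L (adjoint A)

/-- Structural relations in a perfect embezzlement protocol: the constituent operators
`U₀₀, U₁₀, V₀₀, V₁₀` satisfy the displayed iteration identities, and in particular
`‖(U₀₀†)^n ψ‖ = 1` for all `n`. -/
theorem embezzlement_constituent_operator_relations
    {H : Type*} [NormedAddCommGroup H] [InnerProductSpace ℂ H] [CompleteSpace H]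
    (ψ : H) (hψ : ‖ψ‖ = 1) (U00 U10 V00 V10 : H →L[ℂ] H)
    (hU : (adjoint U00) ∘L U00 + (adjoint U10) ∘L U10 = 1)
    (hV : (adjoint V00) ∘L V00 + (adjoint V10) ∘L V10 = 1)
    (hc00 : StarCommuteOps U00 V00) (hc01 : StarCommuteOps U00 V10)
    (hc10 : StarCommuteOps U10 V00) (hc11 : StarCommuteOps U10 V10)
    (he1 : U00 (V00 ψ) = (1 / Real.sqrt 2 : ℂ) • ψ)
    (he2 : U10 (V10 ψ) = (1 / Real.sqrt 2 : ℂ) • ψ)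
    (he3 : U00 (V10 ψ) = 0)
    (he4 : U10 (V00 ψ) = 0) :
    (U00 ψ = (1 / Real.sqrt 2 : ℂ) • (adjoint V00 ψ) ∧
      V00 ψ = (1 / Real.sqrt 2 : ℂ) • (adjoint U00 ψ)) ∧
    (∀ n : ℕ, ((adjoint V00) ^ n) ψ = ((Real.sqrt 2 : ℂ) ^ n) • ((U00 ^ n) ψ) ∧
      (V00 ^ n) ψ = ((1 / Real.sqrt 2 : ℂ) ^ n) • (((adjoint U00) ^ n) ψ)) ∧
    (∀ n : ℕ, (U00 ^ n) (((adjoint U00) ^ n) ψ) = ψ) ∧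
    (∀ n : ℕ, ‖((adjoint U00) ^ n) ψ‖ = 1) := by
  set s : ℂ := ((Real.sqrt 2 : ℝ) : ℂ) with hs_def
  set c : ℂ := (1 / Real.sqrt 2 : ℂ) with hc_def
  have hs0 : s ≠ 0 := by
    simp only [hs_def, ne_eq, Complex.ofReal_eq_zero]
    positivity
  have hcs : c * s = 1 := one_div_mul_cancel hs0
  have hsc : s * c = 1 := by rw [mul_comm]; exact hcs
  -- operator-level commutation of U00 with adjoint V00
  have hop1 : U00 ∘L adjoint V00 = adjoint V00 ∘L U00 := by
    have h := congrArg ContinuousLinearMap.adjoint hc00.2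
    simpa [ContinuousLinearMap.adjoint_comp, ContinuousLinearMap.adjoint_adjoint] using h.symm
  have hop2 : U00 ∘L adjoint V10 = adjoint V10 ∘L U00 := by
    have h := congrArg ContinuousLinearMap.adjoint hc01.2
    simpa [ContinuousLinearMap.adjoint_comp, ContinuousLinearMap.adjoint_adjoint] using h.symm
  have hcomm1 : ∀ x, U00 ((adjoint V00) x) = (adjoint V00) (U00 x) := fun x => by
    have := ContinuousLinearMap.ext_iff.mp hop1 x
    simpa using this
  have hcomm2 : ∀ x, U00 ((adjoint V10) x) = (adjoint V10) (U00 x) := fun x => by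
    have := ContinuousLinearMap.ext_iff.mp hop2 x
    simpa using this
  -- resolutions of the identity, pointwise
  have hVpt : ∀ x : H, (adjoint V00) (V00 x) + (adjoint V10) (V10 x) = x := fun x => by
    have := ContinuousLinearMap.ext_iff.mp hV x
    simpa using this
  have hUpt : ∀ x : H, (adjoint U00) (U00 x) + (adjoint U10) (U10 x) = x := fun x => by
    have := ContinuousLinearMap.ext_iff.mp hU x
    simpa using this
  -- Part (i)
  have hiA : U00 ψ = c • (adjoint V00 ψ) := by
    calc U00 ψ = U00 ((adjoint V00) (V00 ψ) + (adjoint V10) (V10 ψ)) := by rw [hVpt ψ]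
      _ = U00 ((adjoint V00) (V00 ψ)) + U00 ((adjoint V10) (V10 ψ)) := map_add _ _ _
      _ = (adjoint V00) (U00 (V00 ψ)) + (adjoint V10) (U00 (V10 ψ)) := by
          rw [hcomm1, hcomm2]
      _ = c • (adjoint V00 ψ) := by
          rw [he1, he3, map_smul, map_zero, add_zero]
  have hiB : V00 ψ = c • (adjoint U00 ψ) := by
    calc V00 ψ = (adjoint U00) (U00 (V00 ψ)) + (adjoint U10) (U10 (V00 ψ)) := (hUpt _).symm
      _ = c • (adjoint U00 ψ) := by
          rw [he1, he4, map_smul, map_zero, add_zero]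
  -- rearranged forms
  have hiA' : (adjoint V00) ψ = s • U00 ψ := by
    rw [hiA, smul_smul, hsc, one_smul]
  have hiB' : (adjoint U00) ψ = s • V00 ψ := by
    rw [hiB, smul_smul, hsc, one_smul]
  -- Commute facts
  have cUV : Commute U00 V00 := hc00.1
  have cAV : Commute (adjoint U00) V00 := hc00.2
  have cBU : Commute (adjoint V00) U00 := hop1.symm
  -- pointwise commutation with powers
  have appcomm : ∀ (P Q : H →L[ℂ] H), Commute P Q → ∀ (n : ℕ) (x : H),
      P ((Q ^ n) x) = (Q ^ n) (P x) := by
    intro P Q hcPQ n x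
    have h := ContinuousLinearMap.ext_iff.mp ((hcPQ.pow_right n).eq) x
    simpa [ContinuousLinearMap.mul_apply] using h
  -- Part (ii)
  have hii : ∀ n : ℕ, ((adjoint V00) ^ n) ψ = (s ^ n) • ((U00 ^ n) ψ) ∧
      (V00 ^ n) ψ = (c ^ n) • (((adjoint U00) ^ n) ψ) := by
    intro n
    induction n with
    | zero => simp
    | succ n ih =>
      obtain ⟨ih1, ih2⟩ := ih
      constructor
      · have step : (adjoint V00) (((adjoint V00) ^ n) ψ)
            = (s ^ (n+1)) • ((U00 ^ (n+1)) ψ) := by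
          rw [ih1, map_smul, appcomm _ _ cBU n ψ, hiA', map_smul, smul_smul,
            pow_succ s n, pow_succ U00 n, ContinuousLinearMap.mul_apply]
        calc ((adjoint V00) ^ (n+1)) ψ = (adjoint V00) (((adjoint V00) ^ n) ψ) := by
              rw [pow_succ' (adjoint V00) n, ContinuousLinearMap.mul_apply]
          _ = (s ^ (n+1)) • ((U00 ^ (n+1)) ψ) := step
      · have step : V00 (((adjoint U00) ^ n) ψ)
            = ((adjoint U00) ^ n) (V00 ψ) := by
          have cVA : Commute V00 (adjoint U00) := cAV.symm
          exact appcomm _ _ cVA n ψ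
        calc (V00 ^ (n+1)) ψ = V00 ((V00 ^ n) ψ) := by
              rw [pow_succ' V00 n, ContinuousLinearMap.mul_apply]
          _ = V00 ((c ^ n) • (((adjoint U00) ^ n) ψ)) := by rw [ih2]
          _ = (c ^ n) • V00 (((adjoint U00) ^ n) ψ) := map_smul _ _ _
          _ = (c ^ n) • ((adjoint U00) ^ n) (V00 ψ) := by rw [step]
          _ = (c ^ n) • ((adjoint U00) ^ n) (c • (adjoint U00 ψ)) := by rw [hiB]
          _ = (c ^ (n+1)) • (((adjoint U00) ^ (n+1)) ψ) := by
              rw [map_smul, smul_smul, pow_succ c n, pow_succ (adjoint U00) n,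
                ContinuousLinearMap.mul_apply]
  -- auxiliary: U00^n V00^n ψ = c^n ψ
  have hW : ∀ n : ℕ, (U00 ^ n) ((V00 ^ n) ψ) = (c ^ n) • ψ := by
    intro n
    induction n with
    | zero => simp
    | succ n ih =>
      have hpowcomm : ∀ x, (U00 ^ (n+1)) ((V00 ^ n) x) = (V00 ^ n) ((U00 ^ (n+1)) x) :=
        appcomm _ _ (cUV.pow_left (n+1)) n
      have hUn1 : (U00 ^ (n+1)) (V00 ψ) = c • ((U00 ^ n) ψ) := by
        rw [pow_succ U00 n, ContinuousLinearMap.mul_apply, he1, map_smul]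
      calc (U00 ^ (n+1)) ((V00 ^ (n+1)) ψ)
          = (U00 ^ (n+1)) ((V00 ^ n) (V00 ψ)) := by
            rw [pow_succ V00 n, ContinuousLinearMap.mul_apply]
        _ = (V00 ^ n) ((U00 ^ (n+1)) (V00 ψ)) := hpowcomm _
        _ = (V00 ^ n) (c • ((U00 ^ n) ψ)) := by rw [hUn1]
        _ = c • (V00 ^ n) ((U00 ^ n) ψ) := map_smul _ _ _
        _ = c • (U00 ^ n) ((V00 ^ n) ψ) := by
            rw [appcomm _ _ (cUV.symm.pow_left n) n ψ]
        _ = (c ^ (n+1)) • ψ := by rw [ih, smul_smul, pow_succ c n, mul_comm]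
  -- Part (iii)
  have hiii : ∀ n : ℕ, (U00 ^ n) (((adjoint U00) ^ n) ψ) = ψ := by
    intro n
    have h2 := (hii n).2
    have hA : ((adjoint U00) ^ n) ψ = (s ^ n) • ((V00 ^ n) ψ) := by
      rw [h2, smul_smul, ← mul_pow, hsc, one_pow, one_smul]
    rw [hA, map_smul, hW n, smul_smul, ← mul_pow, hsc, one_pow, one_smul]
  -- Part (iv)
  have hiv : ∀ n : ℕ, ‖((adjoint U00) ^ n) ψ‖ = 1 := by
    intro n
    have hpow : (adjoint U00) ^ n = adjoint (U00 ^ n) := by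
      rw [← ContinuousLinearMap.star_eq_adjoint, ← ContinuousLinearMap.star_eq_adjoint,
        star_pow]
    set x := ((adjoint U00) ^ n) ψ with hx
    have hinner : (inner ℂ x x : ℂ) = inner ℂ ψ ψ := by
      calc (inner ℂ x x : ℂ) = inner ℂ (adjoint (U00 ^ n) ψ) x := by rw [← hpow]
        _ = inner ℂ ψ ((U00 ^ n) x) := ContinuousLinearMap.adjoint_inner_left _ _ _
        _ = inner ℂ ψ ψ := by rw [hx, hiii n]
    have hnorm2 : (‖x‖ ^ 2 : ℝ) = ‖ψ‖ ^ 2 := by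
      have h1 : (inner ℂ x x : ℂ) = ((‖x‖ : ℂ)) ^ 2 := by
        rw [inner_self_eq_norm_sq_to_K]
        norm_cast
      have h2 : (inner ℂ ψ ψ : ℂ) = ((‖ψ‖ : ℂ)) ^ 2 := by
        rw [inner_self_eq_norm_sq_to_K]
        norm_cast
      have := h1.symm.trans (hinner.trans h2)
      exact_mod_cast this
    have : ‖x‖ = Real.sqrt (‖ψ‖ ^ 2) := by
      rw [← hnorm2, Real.sqrt_sq (norm_nonneg x)]
    rw [this, hψ]
    simp
  exact ⟨⟨hiA, hiB⟩, hii, hiii, hiv⟩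
end

section
/- Uniqueness of Schmidt coefficients: let X and Y be types and z ∈ ℓ²(X × Y). Suppose d, c : ℕ → ℝ are nonnegative nonincreasing sequences with ∑' k, (d k)² < ∞ and ∑' k, (c k)² < ∞, u, w : ℕ → ℓ²(X) and v, t : ℕ → ℓ²(Y) are orthonormal sequences, and for every (x, y) ∈ X × Y both z (x, y) = ∑' k, (d k : ℂ) * (u k) x * (v k) y and z (x, y) = ∑' k, (c k : ℂ) * (w k) x * (t k) y. Then c = d. -/
open scoped ComplexConjugate ENNReal

set_option maxHeartbeats 1000000

namespace SchmidtAux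

variable {X Y : Type*}

local notation "⟪" x ", " y "⟫" => @inner ℂ _ _ x y

lemma summable_sq (e : l2 X) : Summable fun x => ‖e x‖ ^ 2 := by
  have h := (lp.memℓp e).summable (p := 2) (by norm_num)
  have h2 : ((2 : ℝ≥0∞).toReal) = (2 : ℝ) := by norm_num
  rw [h2] at h
  simpa [Real.rpow_two] using h

lemma summable_norm_mul (e e' : l2 X) : Summable fun x => ‖e x‖ * ‖e' x‖ := by
  refine Summable.of_nonneg_of_le (fun x => by positivity) (fun x => ?_)
    (((summable_sq e).add (summable_sq e')).div_const 2)
  nlinarith [sq_nonneg (‖e x‖ - ‖e' x‖)]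

lemma summable_conj_mul (e e' : l2 X) : Summable fun x => ‖(conj (e x)) * e' x‖ := by
  simpa [norm_mul] using summable_norm_mul e e'

lemma memℓp_tensor (e : l2 X) (f : l2 Y) :
    Memℓp (fun p : X × Y => e p.1 * f p.2) 2 := by
  apply memℓp_gen
  have h : Summable fun p : X × Y => ‖e p.1‖ ^ 2 * ‖f p.2‖ ^ 2 :=
    (summable_sq e).mul_of_nonneg (summable_sq f) (fun x => by positivity)
      (fun y => by positivity)
  have h2 : ((2 : ℝ≥0∞).toReal) = (2 : ℝ) := by norm_num
  rw [h2]
  refine h.congr fun p => ?_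
  rw [Real.rpow_two, norm_mul]
  ring

noncomputable def tensor (e : l2 X) (f : l2 Y) : l2 (X × Y) :=
  ⟨fun p => e p.1 * f p.2, memℓp_tensor e f⟩

@[simp] lemma tensor_apply (e : l2 X) (f : l2 Y) (p : X × Y) :
    (tensor e f) p = e p.1 * f p.2 := rfl

lemma inner_tensor (e e' : l2 X) (f f' : l2 Y) :
    ⟪tensor e f, tensor e' f'⟫ = ⟪e, e'⟫ * ⟪f, f'⟫ := by
  rw [lp.inner_eq_tsum, lp.inner_eq_tsum, lp.inner_eq_tsum]
  simp only [RCLike.inner_apply, tensor_apply]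
  rw [tsum_mul_tsum_of_summable_norm (by simpa [norm_mul] using summable_norm_mul e' e)
    (by simpa [norm_mul] using summable_norm_mul f' f)]
  refine tsum_congr fun p => ?_
  simp only [map_mul]
  ring

lemma orthonormal_tensor {u : ℕ → l2 X} {v : ℕ → l2 Y} (hu : Orthonormal ℂ u)
    (hv : Orthonormal ℂ v) : Orthonormal ℂ (fun k => tensor (u k) (v k)) := by
  rw [orthonormal_iff_ite] at hu hv ⊢
  intro i j
  rw [inner_tensor, hu i j, hv i j]
  by_cases h : i = j <;> simp [h]

variable {X Y : Type*}


/-- coordinate evaluation as a continuous linear map -/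
noncomputable def evalCLM {α : Type*} (p : α) : l2 α →L[ℂ] ℂ :=
  LinearMap.mkContinuous
    { toFun := fun f => f p
      map_add' := fun f g => by simp [lp.coeFn_add]
      map_smul' := fun c f => by simp [lp.coeFn_smul] }
    1 (fun f => by
      rw [one_mul]; exact lp.norm_apply_le_norm (by norm_num : (2 : ℝ≥0∞) ≠ 0) f p)

@[simp] lemma evalCLM_apply {α : Type*} (p : α) (f : l2 α) : evalCLM p f = f p := rfl

lemma summable_smul_orthonormal {T : ℕ → l2 (X × Y)} (hT : Orthonormal ℂ T)
    {d : ℕ → ℝ} (hdsum : Summable fun k => d k ^ 2) :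
    Summable fun k => (d k : ℂ) • T k := by
  have hmem : Memℓp (fun k : ℕ => (d k : ℂ)) 2 := by
    apply memℓp_gen
    have h2 : ((2 : ℝ≥0∞).toReal) = (2 : ℝ) := by norm_num
    rw [h2]
    refine hdsum.congr fun k => ?_
    rw [Real.rpow_two]
    simp [Complex.norm_real, Real.norm_eq_abs, sq_abs]
  set fd : lp (fun _ : ℕ => ℂ) 2 := ⟨fun k => (d k : ℂ), hmem⟩ with hfd
  have hnorm : ∀ k, ‖T k‖ = 1 := hT.1
  let V : ∀ _ : ℕ, ℂ →ₗᵢ[ℂ] l2 (X × Y) := fun k =>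
    { toLinearMap := LinearMap.toSpanSingleton ℂ _ (T k)
      norm_map' := fun a => by
        simp [LinearMap.toSpanSingleton_apply, norm_smul, hnorm k] }
  have hV : OrthogonalFamily ℂ (fun _ : ℕ => ℂ) V := by
    intro i j hij a b
    simp only [V, LinearIsometry.coe_mk, LinearMap.toSpanSingleton_apply]
    rw [inner_smul_left, inner_smul_right, hT.2 hij]
    ring
  have := hV.summable_of_lp fd
  exact this.congr fun k => by
    simp [V, LinearMap.toSpanSingleton_apply, hfd]

lemma hasSum_inner_z (z : l2 (X × Y)) (d : ℕ → ℝ) (hdsum : Summable fun k => d k ^ 2)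
    (u : ℕ → l2 X) (v : ℕ → l2 Y) (hu : Orthonormal ℂ u) (hv : Orthonormal ℂ v)
    (hzd : ∀ x y, z (x, y) = ∑' k, (d k : ℂ) * (u k) x * (v k) y)
    (q : l2 (X × Y)) :
    HasSum (fun k => (d k : ℂ) * ⟪q, tensor (u k) (v k)⟫) ⟪q, z⟫ := by
  have hTo : Orthonormal ℂ (fun k => tensor (u k) (v k)) := orthonormal_tensor hu hv
  have hsum := summable_smul_orthonormal hTo hdsum
  set Z := ∑' k, (d k : ℂ) • tensor (u k) (v k) with hZdef
  have hZ : HasSum (fun k => (d k : ℂ) • tensor (u k) (v k)) Z := hsum.hasSum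
  have hzZ : z = Z := by
    apply lp.ext
    funext p
    obtain ⟨x, y⟩ := p
    have h1 := hZ.mapL (evalCLM (x, y))
    simp only [evalCLM_apply, lp.coeFn_smul, Pi.smul_apply, tensor_apply, smul_eq_mul] at h1
    have h2 : z (x, y) = Z (x, y) := by
      rw [hzd x y, ← h1.tsum_eq]
      exact tsum_congr fun k => by ring
    exact h2
  have h3 := hZ.mapL (innerSL ℂ q)
  rw [← hzZ] at h3
  simpa only [innerSL_apply_apply, inner_smul_right] using h3


lemma maj {d ρ : ℕ → ℝ} {n : ℕ} (hd0 : ∀ k, 0 ≤ d k) (hanti : Antitone d)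
    (hρ0 : ∀ m, 0 ≤ ρ m) (hρ1 : ∀ m, ρ m ≤ 1) (hρsum : Summable ρ)
    (hρtot : ∑' m, ρ m ≤ (n : ℝ)) (hg : Summable fun m => d m * ρ m) :
    ∑' m, d m * ρ m ≤ ∑ m ∈ Finset.range n, d m := by
  have hsplit := Summable.sum_add_tsum_nat_add (f := fun m => d m * ρ m) n hg
  have hρsplit := Summable.sum_add_tsum_nat_add (f := ρ) n hρsum
  have htailρ : ∑' i, ρ (i + n) ≤ (n : ℝ) - ∑ m ∈ Finset.range n, ρ m := by linarith
  have htail : ∑' i, d (i + n) * ρ (i + n) ≤ d n * ∑' i, ρ (i + n) := by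
    rw [← tsum_mul_left]
    exact Summable.tsum_le_tsum
      (fun i => mul_le_mul_of_nonneg_right (hanti (Nat.le_add_left n i)) (hρ0 _))
      ((summable_nat_add_iff n).2 hg) (((summable_nat_add_iff n).2 hρsum).mul_left _)
  have h2 : d n * ∑' i, ρ (i + n) ≤ d n * ((n : ℝ) - ∑ m ∈ Finset.range n, ρ m) :=
    mul_le_mul_of_nonneg_left htailρ (hd0 n)
  have h3 : d n * ((n : ℝ) - ∑ m ∈ Finset.range n, ρ m)
      = ∑ m ∈ Finset.range n, d n * (1 - ρ m) := by
    rw [← Finset.mul_sum, Finset.sum_sub_distrib, Finset.sum_const, Finset.card_range]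
    simp
  have h4 : ∑ m ∈ Finset.range n, (d m * ρ m + d n * (1 - ρ m))
      ≤ ∑ m ∈ Finset.range n, d m := by
    refine Finset.sum_le_sum fun m hm => ?_
    have hmn : m ≤ n := le_of_lt (Finset.mem_range.mp hm)
    have hdm := hanti hmn
    nlinarith [hρ1 m, hρ0 m]
  calc ∑' m, d m * ρ m
      = ∑ m ∈ Finset.range n, d m * ρ m + ∑' i, d (i + n) * ρ (i + n) := hsplit.symm
    _ ≤ ∑ m ∈ Finset.range n, d m * ρ m + ∑ m ∈ Finset.range n, d n * (1 - ρ m) := by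
        have := htail.trans h2
        rw [h3] at this
        linarith
    _ = ∑ m ∈ Finset.range n, (d m * ρ m + d n * (1 - ρ m)) := Finset.sum_add_distrib.symm
    _ ≤ _ := h4

lemma partial_le (z : l2 (X × Y)) (d c : ℕ → ℝ)
    (hd0 : ∀ k, 0 ≤ d k) (hdmono : ∀ k, d (k + 1) ≤ d k) (hc0 : ∀ k, 0 ≤ c k)
    (hdsum : Summable fun k => (d k) ^ 2) (hcsum : Summable fun k => (c k) ^ 2)
    (u w : ℕ → l2 X) (v t : ℕ → l2 Y)
    (hu : Orthonormal ℂ u) (hv : Orthonormal ℂ v)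
    (hw : Orthonormal ℂ w) (ht : Orthonormal ℂ t)
    (hzd : ∀ (x : X) (y : Y), z (x, y) = ∑' k, (d k : ℂ) * (u k) x * (v k) y)
    (hzc : ∀ (x : X) (y : Y), z (x, y) = ∑' k, (c k : ℂ) * (w k) x * (t k) y)
    (n : ℕ) :
    ∑ j ∈ Finset.range n, c j ≤ ∑ j ∈ Finset.range n, d j := by
  -- the inner product of the `j`-th c-tensor with z is `c j`
  have hc_j : ∀ j, ⟪tensor (w j) (t j), z⟫ = (c j : ℂ) := by
    intro j
    have h := hasSum_inner_z z c hcsum w t hw ht hzc (tensor (w j) (t j))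
    have heq : (fun m => (c m : ℂ) * ⟪tensor (w j) (t j), tensor (w m) (t m)⟫)
        = fun m => if m = j then (c j : ℂ) else 0 := by
      funext m
      rw [inner_tensor, orthonormal_iff_ite.mp hw, orthonormal_iff_ite.mp ht]
      by_cases hjm : j = m
      · subst hjm; simp
      · simp [hjm, Ne.symm hjm]
    rw [heq] at h
    exact h.unique (hasSum_ite_eq j ((c j : ℂ)))
  -- the d-side expansion of the same inner product
  have hd_j : ∀ j, HasSum (fun m => (d m : ℂ) * (⟪w j, u m⟫ * ⟪t j, v m⟫)) ((c j : ℂ)) := by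
    intro j
    have h := hasSum_inner_z z d hdsum u v hu hv hzd (tensor (w j) (t j))
    rw [hc_j j] at h
    simpa only [inner_tensor] using h
  set R : ℕ → ℂ := fun m => ∑ j ∈ Finset.range n, ⟪w j, u m⟫ * ⟪t j, v m⟫ with hR
  -- partial sum identity
  have hsum_eq : ((∑ j ∈ Finset.range n, c j : ℝ) : ℂ) = ∑' m, (d m : ℂ) * R m := by
    push_cast
    have h1 : ∀ j ∈ Finset.range n,
        (c j : ℂ) = ∑' m, (d m : ℂ) * (⟪w j, u m⟫ * ⟪t j, v m⟫) :=
      fun j _ => ((hd_j j).tsum_eq).symm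
    rw [Finset.sum_congr rfl h1, ← Summable.tsum_finsetSum (fun j _ => (hd_j j).summable)]
    refine tsum_congr fun m => ?_
    rw [hR, Finset.mul_sum]
  -- Bessel-type bounds
  have bessel_u : ∀ (s : Finset ℕ) (j : ℕ), ∑ m ∈ s, ‖⟪w j, u m⟫‖ ^ 2 ≤ 1 := by
    intro s j
    calc ∑ m ∈ s, ‖⟪w j, u m⟫‖ ^ 2 = ∑ m ∈ s, ‖⟪u m, w j⟫‖ ^ 2 :=
          Finset.sum_congr rfl fun m _ => by rw [norm_inner_symm]
      _ ≤ ‖w j‖ ^ 2 := hu.sum_inner_products_le (w j)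
      _ = 1 := by rw [hw.1 j]; norm_num
  have bessel_v : ∀ (s : Finset ℕ) (j : ℕ), ∑ m ∈ s, ‖⟪t j, v m⟫‖ ^ 2 ≤ 1 := by
    intro s j
    calc ∑ m ∈ s, ‖⟪t j, v m⟫‖ ^ 2 = ∑ m ∈ s, ‖⟪v m, t j⟫‖ ^ 2 :=
          Finset.sum_congr rfl fun m _ => by rw [norm_inner_symm]
      _ ≤ ‖t j‖ ^ 2 := hv.sum_inner_products_le (t j)
      _ = 1 := by rw [ht.1 j]; norm_num
  have bessel_w : ∀ m, ∑ j ∈ Finset.range n, ‖⟪w j, u m⟫‖ ^ 2 ≤ 1 := by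
    intro m
    calc ∑ j ∈ Finset.range n, ‖⟪w j, u m⟫‖ ^ 2 ≤ ‖u m‖ ^ 2 :=
          hw.sum_inner_products_le (u m)
      _ = 1 := by rw [hu.1 m]; norm_num
  have bessel_t : ∀ m, ∑ j ∈ Finset.range n, ‖⟪t j, v m⟫‖ ^ 2 ≤ 1 := by
    intro m
    calc ∑ j ∈ Finset.range n, ‖⟪t j, v m⟫‖ ^ 2 ≤ ‖v m‖ ^ 2 :=
          ht.sum_inner_products_le (v m)
      _ = 1 := by rw [hv.1 m]; norm_num
  have hRnorm : ∀ m, ‖R m‖ ≤ ∑ j ∈ Finset.range n, ‖⟪w j, u m⟫‖ * ‖⟪t j, v m⟫‖ :=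
    fun m => (norm_sum_le _ _).trans_eq (Finset.sum_congr rfl fun j _ => norm_mul _ _)
  have hR1 : ∀ m, ‖R m‖ ≤ 1 := by
    intro m
    have h2 := Finset.sum_mul_sq_le_sq_mul_sq (Finset.range n)
      (fun j => ‖⟪w j, u m⟫‖) (fun j => ‖⟪t j, v m⟫‖)
    have h3 : (0 : ℝ) ≤ ∑ j ∈ Finset.range n, ‖⟪w j, u m⟫‖ * ‖⟪t j, v m⟫‖ :=
      Finset.sum_nonneg fun j _ => mul_nonneg (norm_nonneg _) (norm_nonneg _)
    have h4 : (0 : ℝ) ≤ ∑ j ∈ Finset.range n, ‖⟪w j, u m⟫‖ ^ 2 :=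
      Finset.sum_nonneg fun j _ => sq_nonneg _
    have h5 : (0 : ℝ) ≤ ∑ j ∈ Finset.range n, ‖⟪t j, v m⟫‖ ^ 2 :=
      Finset.sum_nonneg fun j _ => sq_nonneg _
    nlinarith [hRnorm m, bessel_w m, bessel_t m, norm_nonneg (R m)]
  have hRN : ∀ N, ∑ m ∈ Finset.range N, ‖R m‖ ≤ (n : ℝ) := by
    intro N
    have step : ∀ m, ‖R m‖
        ≤ ∑ j ∈ Finset.range n, (‖⟪w j, u m⟫‖ ^ 2 + ‖⟪t j, v m⟫‖ ^ 2) / 2 := by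
      intro m
      refine (hRnorm m).trans (Finset.sum_le_sum fun j _ => ?_)
      nlinarith [sq_nonneg (‖⟪w j, u m⟫‖ - ‖⟪t j, v m⟫‖)]
    calc ∑ m ∈ Finset.range N, ‖R m‖
        ≤ ∑ m ∈ Finset.range N, ∑ j ∈ Finset.range n,
            (‖⟪w j, u m⟫‖ ^ 2 + ‖⟪t j, v m⟫‖ ^ 2) / 2 :=
          Finset.sum_le_sum fun m _ => step m
      _ = ∑ j ∈ Finset.range n, ∑ m ∈ Finset.range N,
            (‖⟪w j, u m⟫‖ ^ 2 + ‖⟪t j, v m⟫‖ ^ 2) / 2 := Finset.sum_comm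
      _ ≤ ∑ j ∈ Finset.range n, 1 := by
          refine Finset.sum_le_sum fun j _ => ?_
          rw [← Finset.sum_div, Finset.sum_add_distrib]
          have := bessel_u (Finset.range N) j
          have := bessel_v (Finset.range N) j
          linarith
      _ = (n : ℝ) := by simp
  have hRsum : Summable fun m => ‖R m‖ :=
    summable_of_sum_range_le (fun m => norm_nonneg _) hRN
  have hRtot : ∑' m, ‖R m‖ ≤ (n : ℝ) :=
    Real.tsum_le_of_sum_range_le (fun m => norm_nonneg _) hRN
  have hanti : Antitone d := antitone_nat_of_succ_le hdmono
  have hdR : Summable fun m => d m * ‖R m‖ :=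
    Summable.of_nonneg_of_le (fun m => mul_nonneg (hd0 m) (norm_nonneg _))
      (fun m => mul_le_mul_of_nonneg_right (hanti (Nat.zero_le m)) (norm_nonneg _))
      (hRsum.mul_left (d 0))
  have hnorm_eq : ∀ m, ‖(d m : ℂ) * R m‖ = d m * ‖R m‖ := by
    intro m
    rw [norm_mul, Complex.norm_real, Real.norm_eq_abs, abs_of_nonneg (hd0 m)]
  calc ∑ j ∈ Finset.range n, c j
      = ‖((∑ j ∈ Finset.range n, c j : ℝ) : ℂ)‖ := by
        rw [Complex.norm_real, Real.norm_eq_abs,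
          abs_of_nonneg (Finset.sum_nonneg fun j _ => hc0 j)]
    _ = ‖∑' m, (d m : ℂ) * R m‖ := by rw [hsum_eq]
    _ ≤ ∑' m, ‖(d m : ℂ) * R m‖ :=
        norm_tsum_le_tsum_norm (by
          refine hdR.congr fun m => ?_
          rw [hnorm_eq m])
    _ = ∑' m, d m * ‖R m‖ := tsum_congr fun m => hnorm_eq m
    _ ≤ ∑ m ∈ Finset.range n, d m :=
        maj hd0 hanti (fun m => norm_nonneg _) hR1 hRsum hRtot hdR

end SchmidtAux

/-- Uniqueness of Schmidt coefficients: two Schmidt decompositions of the same vector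
`z ∈ ℓ²(X × Y)` with nonnegative nonincreasing coefficient sequences have the same
coefficients. -/
theorem schmidt_coefficients_unique {X Y : Type*} (z : l2 (X × Y))
    (d c : ℕ → ℝ)
    (hd0 : ∀ k, 0 ≤ d k) (hdmono : ∀ k, d (k + 1) ≤ d k)
    (hc0 : ∀ k, 0 ≤ c k) (hcmono : ∀ k, c (k + 1) ≤ c k)
    (hdsum : Summable fun k => (d k) ^ 2) (hcsum : Summable fun k => (c k) ^ 2)
    (u w : ℕ → l2 X) (v t : ℕ → l2 Y)
    (hu : Orthonormal ℂ u) (hv : Orthonormal ℂ v)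
    (hw : Orthonormal ℂ w) (ht : Orthonormal ℂ t)
    (hzd : ∀ (x : X) (y : Y), z (x, y) = ∑' k, (d k : ℂ) * (u k) x * (v k) y)
    (hzc : ∀ (x : X) (y : Y), z (x, y) = ∑' k, (c k : ℂ) * (w k) x * (t k) y) :
    c = d := by
  have h1 : ∀ n, ∑ j ∈ Finset.range n, c j ≤ ∑ j ∈ Finset.range n, d j :=
    SchmidtAux.partial_le z d c hd0 hdmono hc0 hdsum hcsum u w v t hu hv hw ht hzd hzc
  have h2 : ∀ n, ∑ j ∈ Finset.range n, d j ≤ ∑ j ∈ Finset.range n, c j :=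
    SchmidtAux.partial_le z c d hc0 hcmono hd0 hcsum hdsum w u t v hw ht hu hv hzc hzd
  have hkey : ∀ n, ∑ j ∈ Finset.range n, c j = ∑ j ∈ Finset.range n, d j :=
    fun n => le_antisymm (h1 n) (h2 n)
  funext k
  have ha := hkey (k + 1)
  have hb := hkey k
  rw [Finset.sum_range_succ, Finset.sum_range_succ] at ha
  linarith
end
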